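/- arXiv:0707.4255 — 6 statements merged into one kernel-verified Lean document; each statement's English description precedes it below -/
import Mathlib

section
/- There is an absolute constant c > 0 such that for every unsatisfiable CNF formula K over n variables all of whose clauses have width at most r, it holds that S(K) ≥ exp(c · (w(K) − r)² / n). -/
open scoped Classical

/-- Propositional variables are natural numbers. -/
abbrev Var := ℕ

/-- A literal: a variable with a polarity (`true` = positive occurrence). -/
abbrev Lit := Var × Bool

/-- A clause: a finite set of literals. -/
abbrev Clause := Finset Lit

/-- A CNF formula: a finite collection of clauses. -/
abbrev CNF := Finset Clause

/-- A truth assignment to all variables. -/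
abbrev Assignment := Var → Bool

/-- A clause is proper if it contains no variable together with its negation. -/
def Clause.Proper (C : Clause) : Prop := ∀ v : Var, ¬((v, true) ∈ C ∧ (v, false) ∈ C)

/-- The set of variables occurring in a clause. -/
def Clause.vars (C : Clause) : Finset Var := C.image Prod.fst

/-- The set of variables occurring in a CNF formula. -/
def CNF.vars (K : CNF) : Finset Var := K.sup Clause.vars

/-- Every clause of the CNF is a proper clause. -/
def CNF.Proper (K : CNF) : Prop := ∀ C ∈ K, Clause.Proper C

/-- Evaluation of a literal under an assignment. -/
def Lit.eval (a : Assignment) (l : Lit) : Bool := if l.2 then a l.1 else !(a l.1)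

/-- An assignment satisfies a clause if it makes some literal of it true. -/
def Clause.Sat (a : Assignment) (C : Clause) : Prop := ∃ l ∈ C, Lit.eval a l = true

/-- An assignment satisfies a CNF if it satisfies every clause. -/
def CNF.Sat (a : Assignment) (K : CNF) : Prop := ∀ C ∈ K, Clause.Sat a C

/-- A CNF formula is unsatisfiable. -/
def CNF.Unsat (K : CNF) : Prop := ¬∃ a : Assignment, CNF.Sat a K

/-- A 3CNF: every clause has exactly 3 literals over 3 distinct variables. -/
def Is3CNF (K : CNF) : Prop := ∀ C ∈ K, C.card = 3 ∧ (Clause.vars C).card = 3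

/-- One admissible step in a resolution derivation from the CNF `K`, given the
list `prev` of earlier clauses: `D` is a clause of `K`, or is obtained by
weakening from an earlier clause, or is the resolvent `C ∨ C'` of two earlier
clauses `C ∨ x` and `C' ∨ ¬x` where the variable `x` occurs in neither `C`
nor `C'`. -/
def ResStep (K : CNF) (prev : List Clause) (D : Clause) : Prop :=
  D ∈ K ∨ (∃ E ∈ prev, E ⊆ D) ∨
    (∃ C₁ ∈ prev, ∃ C₂ ∈ prev, ∃ x : Var,
      (x, true) ∈ C₁ ∧ (x, false) ∈ C₂ ∧
      D = C₁.erase (x, true) ∪ C₂.erase (x, false) ∧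
      (x, true) ∉ D ∧ (x, false) ∉ D)

/-- A resolution derivation of the clause `D` from the CNF `K`: a nonempty
sequence of (proper) clauses, each a clause of `K`, a weakening of an earlier
clause, or a resolvent of two earlier clauses, ending with `D`.  Its size is
the length of the list. -/
def IsResDerivation (K : CNF) (L : List Clause) (D : Clause) : Prop :=
  L ≠ [] ∧ L.getLast? = some D ∧
    ∀ i : Fin L.length, Clause.Proper (L.get i) ∧ ResStep K (L.take i.val) (L.get i)

/-- A resolution refutation of `K`: a derivation of the empty clause from `K`. -/
def IsResRefutation (K : CNF) (L : List Clause) : Prop := IsResDerivation K L ∅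

/-- Extend an assignment of the variables X = {0, …, n-1} to all variables
(by `false` elsewhere). -/
def extendAssign {n : ℕ} (a : Fin n → Bool) : Assignment :=
  fun v => if h : v < n then a ⟨v, h⟩ else false

/-- The set of assignments to the n variables X = {0, …, n-1} satisfying `K`
(for `K` with variables among X this is the set of satisfying assignments of `K`). -/
def satSet (n : ℕ) (K : CNF) : Set (Fin n → Bool) := {a | CNF.Sat (extendAssign a) K}

/-- The CNF `A` (over X = {0, …, n-1} together with extension variables) discards the
assignment `a` to X if no extension of `a` to all remaining variables satisfies `A`. -/
def Discards (n : ℕ) (A : CNF) (a : Fin n → Bool) : Prop :=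
  ¬∃ b : Assignment, (∀ i : Fin n, b i.val = a i) ∧ CNF.Sat b A

/-- The set of assignments to X = {0, …, n-1} discarded by `A`. -/
def discardedSet (n : ℕ) (A : CNF) : Set (Fin n → Bool) := {a | Discards n A a}

/-- The minimal size of a resolution refutation of `K`. -/
noncomputable def resSize (K : CNF) : ℕ :=
  sInf {s : ℕ | ∃ L : List Clause, IsResRefutation K L ∧ L.length = s}

/-- The maximal width of a clause in a derivation. -/
def listWidth (L : List Clause) : ℕ := (L.map Finset.card).foldr max 0

/-- The minimal, over all resolution refutations of `K`, of the maximal width of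
a clause appearing in the refutation. -/
noncomputable def resWidth (K : CNF) : ℕ :=
  sInf {w : ℕ | ∃ L : List Clause, IsResRefutation K L ∧ listWidth L = w}

section Aux

/-- Inductive characterization of valid derivation lists. -/
inductive GoodI (K : CNF) : List Clause → Prop
  | nil : GoodI K []
  | snoc (L : List Clause) (D : Clause) : GoodI K L → Clause.Proper D → ResStep K L D →
      GoodI K (L ++ [D])

lemma resStep_mono {K : CNF} {prev prev' : List Clause} {D : Clause}
    (h : ∀ C ∈ prev, C ∈ prev') : ResStep K prev D → ResStep K prev' D := by
  rintro (h1 | ⟨E, hE, hsub⟩ | ⟨C₁, h₁, C₂, h₂, x, hx₁, hx₂, hD, hn₁, hn₂⟩)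
  · exact Or.inl h1
  · exact Or.inr (Or.inl ⟨E, h _ hE, hsub⟩)
  · exact Or.inr (Or.inr ⟨C₁, h _ h₁, C₂, h _ h₂, x, hx₁, hx₂, hD, hn₁, hn₂⟩)

lemma goodI_proper {K : CNF} {L : List Clause} (h : GoodI K L) : ∀ C ∈ L, Clause.Proper C := by
  induction h with
  | nil => simp
  | snoc L D hL hP hR ih =>
      intro C hC
      rcases List.mem_append.1 hC with hC | hC
      · exact ih C hC
      · rw [List.mem_singleton.1 hC]; exact hP

lemma goodI_iff (K : CNF) (L : List Clause) :
    GoodI K L ↔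
      ∀ i : Fin L.length, Clause.Proper (L.get i) ∧ ResStep K (L.take i.val) (L.get i) := by
  constructor
  · intro h
    induction h with
    | nil => intro i; exact absurd i.isLt (by simp)
    | snoc L D hL hP hR ih =>
        intro i
        have hi := i.isLt
        rcases Nat.lt_or_ge i.val L.length with h' | h'
        · have hg : (L ++ [D]).get i = L.get ⟨i.val, h'⟩ := List.getElem_append_left h'
          have ht : (L ++ [D]).take i.val = L.take i.val :=
            List.take_append_of_le_length (Nat.le_of_lt h')
          rw [hg, ht]
          exact ih ⟨i.val, h'⟩
        · have hil : i.val = L.length := by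
            have : i.val < L.length + 1 := by simpa using hi
            omega
          have hg : (L ++ [D]).get i = D := List.getElem_concat_length hil i.isLt
          have ht : (L ++ [D]).take i.val = L := by rw [hil]; exact List.take_left (l₁ := L) (l₂ := [D])
          rw [hg, ht]
          exact ⟨hP, hR⟩
  · induction L using List.reverseRecOn with
    | nil => intro _; exact GoodI.nil
    | append_singleton L D ih =>
        intro h
        have hlen : L.length < (L ++ [D]).length := by simp
        refine GoodI.snoc L D (ih ?_) ?_ ?_
        · intro i
          have hi' : i.val < (L ++ [D]).length := by simp
          have := h ⟨i.val, hi'⟩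
          have hg : (L ++ [D]).get ⟨i.val, hi'⟩ = L.get i := List.getElem_append_left i.isLt
          have ht : (L ++ [D]).take i.val = L.take i.val :=
            List.take_append_of_le_length (Nat.le_of_lt i.isLt)
          rw [hg, ht] at this
          exact this
        · have := (h ⟨L.length, hlen⟩).1
          rwa [show (L ++ [D]).get ⟨L.length, hlen⟩ = D from
            List.getElem_concat_length rfl _] at this
        · have := (h ⟨L.length, hlen⟩).2
          rwa [show (L ++ [D]).get ⟨L.length, hlen⟩ = D from
            List.getElem_concat_length rfl _,
            show (L ++ [D]).take L.length = L from List.take_left (l₁ := L) (l₂ := [D])] at this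

lemma isResDerivation_iff {K : CNF} {L : List Clause} {D : Clause} :
    IsResDerivation K L D ↔ (L ≠ [] ∧ L.getLast? = some D ∧ GoodI K L) := by
  unfold IsResDerivation
  rw [goodI_iff]

end Aux
section Aux2

lemma proper_of_subset {C D : Clause} (h : C ⊆ D) (hD : Clause.Proper D) : Clause.Proper C :=
  fun v hv => hD v ⟨h hv.1, h hv.2⟩

lemma proper_empty : Clause.Proper (∅ : Clause) := fun v hv => by simp at hv

/-- The general simulation lemma. -/
lemma goodI_sim {K K' : CNF} (f : Clause → Clause) (P : Clause → Bool) (Q : Clause → Prop)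
    (B : List Clause) (hB : GoodI K' B)
    (hproper : ∀ D, Clause.Proper D → Q D → P D = true → Clause.Proper (f D))
    (hstep : ∀ (prev : List Clause) (D : Clause), (∀ C ∈ prev, Clause.Proper C ∧ Q C) →
        Clause.Proper D → Q D → P D = true → ResStep K prev D →
        ResStep K' (B ++ (prev.filter P).map f) (f D)) :
    ∀ L : List Clause, GoodI K L → (∀ C ∈ L, Q C) →
      GoodI K' (B ++ (L.filter P).map f) := by
  intro L hL
  induction hL with
  | nil => intro _; simpa using hB
  | snoc L D hGood hProper hRes ih =>
      intro hQ
      have hQL : ∀ C ∈ L, Q C := fun C hC => hQ C (List.mem_append_left _ hC)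
      have hQD : Q D := hQ D (List.mem_append_right _ (List.mem_singleton_self D))
      rw [List.filter_append]
      by_cases hPD : P D = true
      · have : List.filter P [D] = [D] := by simp [hPD]
        rw [this, List.map_append, ← List.append_assoc]
        exact GoodI.snoc _ _ (ih hQL) (hproper D hProper hQD hPD)
          (hstep L D (fun C hC => ⟨goodI_proper hGood C hC, hQL C hC⟩) hProper hQD hPD hRes)
      · have : List.filter P [D] = [] := by simp [hPD]
        rw [this, List.append_nil]
        exact ih hQL

lemma goodI_append_indep {K : CNF} {B M : List Clause} (hB : GoodI K B)
    (hM : ∀ D ∈ M, Clause.Proper D ∧ ResStep K B D) : GoodI K (B ++ M) := by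
  induction M using List.reverseRecOn with
  | nil => simpa using hB
  | append_singleton M D ih =>
      rw [← List.append_assoc]
      refine GoodI.snoc _ _ (ih ?_) (hM D (by simp)).1 ?_
      · intro D hD; exact hM D (List.mem_append_left _ hD)
      · exact resStep_mono (fun C hC => List.mem_append_left _ hC) (hM D (by simp)).2

lemma goodI_axioms {K : CNF} (hK : CNF.Proper K) {l : List Clause} (h : ∀ C ∈ l, C ∈ K) :
    GoodI K l := by
  have := goodI_append_indep (K := K) (B := []) (M := l) GoodI.nil
    (fun D hD => ⟨hK D (h D hD), Or.inl (h D hD)⟩)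
  simpa using this

lemma goodI_append {K : CNF} {B M : List Clause} (hB : GoodI K B) (hM : GoodI K M) :
    GoodI K (B ++ M) := by
  induction hM with
  | nil => simpa using hB
  | snoc L D hL hP hR ih =>
      rw [← List.append_assoc]
      exact GoodI.snoc _ _ ih hP
        (resStep_mono (fun C hC => List.mem_append_right _ hC) hR)

lemma listWidth_le_iff {L : List Clause} {m : ℕ} :
    listWidth L ≤ m ↔ ∀ C ∈ L, C.card ≤ m := by
  unfold listWidth
  induction L with
  | nil => simp
  | cons C L ih => simp [ih, Nat.max_le]

end Aux2
section Aux3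

/-- Remove all literals on variable `x` from a clause. -/
def Clause.drop (x : Var) (C : Clause) : Clause := C.filter (fun l => l.1 ≠ x)

lemma Clause.drop_subset (x : Var) (C : Clause) : Clause.drop x C ⊆ C := Finset.filter_subset _ _

/-- Restriction of a CNF by the assignment x := ε. -/
def CNF.restrict (x : Var) (ε : Bool) (K : CNF) : CNF :=
  (K.filter (fun C => (x, ε) ∉ C)).image (Clause.drop x)

lemma mem_restrict {K : CNF} {x : Var} {ε : Bool} {C' : Clause} :
    C' ∈ K.restrict x ε ↔ ∃ C ∈ K, (x, ε) ∉ C ∧ C' = Clause.drop x C := by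
  simp only [CNF.restrict, Finset.mem_image, Finset.mem_filter]
  constructor
  · rintro ⟨C, ⟨h1, h2⟩, h3⟩; exact ⟨C, h1, h2, h3.symm⟩
  · rintro ⟨C, h1, h2, h3⟩; exact ⟨C, ⟨h1, h2⟩, h3.symm⟩

lemma restrict_proper {K : CNF} (hK : CNF.Proper K) (x : Var) (ε : Bool) :
    CNF.Proper (K.restrict x ε) := by
  intro C' hC'
  rcases mem_restrict.1 hC' with ⟨C, hC, -, rfl⟩
  exact proper_of_subset (Clause.drop_subset x C) (hK C hC)

lemma restrict_width {K : CNF} {r : ℕ} (hK : ∀ C ∈ K, C.card ≤ r) (x : Var) (ε : Bool) :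
    ∀ C' ∈ K.restrict x ε, C'.card ≤ r := by
  intro C' hC'
  rcases mem_restrict.1 hC' with ⟨C, hC, -, rfl⟩
  exact le_trans (Finset.card_le_card (Clause.drop_subset x C)) (hK C hC)

lemma mem_vars {K : CNF} {v : Var} : v ∈ CNF.vars K ↔ ∃ C ∈ K, ∃ l ∈ C, l.1 = v := by
  unfold CNF.vars Clause.vars
  simp [Finset.mem_sup, Finset.mem_image]

lemma restrict_vars {K : CNF} {x : Var} {ε : Bool} :
    CNF.vars (K.restrict x ε) ⊆ (CNF.vars K).erase x := by
  intro v hv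
  rcases mem_vars.1 hv with ⟨C', hC', l, hl, rfl⟩
  rcases mem_restrict.1 hC' with ⟨C, hC, -, rfl⟩
  have hlC := Finset.mem_filter.1 hl
  refine Finset.mem_erase.2 ⟨by simpa using hlC.2, mem_vars.2 ⟨C, hC, l, hlC.1, rfl⟩⟩

lemma x_notMem_restrict_vars {K : CNF} {x : Var} {ε : Bool} :
    x ∉ CNF.vars (K.restrict x ε) := fun h => by
  have := Finset.mem_erase.1 (restrict_vars h)
  exact this.1 rfl

def projList (V : Finset Var) (L : List Clause) : List Clause :=
  L.map (fun C => C.filter (fun l => l.1 ∈ V))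

def restrictList (x : Var) (ε : Bool) (L : List Clause) : List Clause :=
  (L.filter (fun C => decide ((x, ε) ∉ C))).map (Clause.drop x)

lemma restrict_goodI {K : CNF} {x : Var} {ε : Bool} {L : List Clause} (hL : GoodI K L) :
    GoodI (K.restrict x ε) (restrictList x ε L) := by
  have main := goodI_sim (K := K) (K' := K.restrict x ε) (Clause.drop x)
    (fun C => decide ((x, ε) ∉ C)) (fun _ => True) [] GoodI.nil
    (fun D hD _ _ => proper_of_subset (Clause.drop_subset x D) hD)
    ?_ L hL (fun _ _ => trivial)
  · simpa [restrictList] using main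
  · intro prev D hprev hD _ hPD hres
    have hPD' : (x, ε) ∉ D := of_decide_eq_true hPD
    rcases hres with h | ⟨E, hE, hsub⟩ | ⟨C₁, h₁, C₂, h₂, y, hy₁, hy₂, hDeq, hn₁, hn₂⟩
    · exact Or.inl (mem_restrict.2 ⟨D, h, hPD', rfl⟩)
    · refine Or.inr (Or.inl ⟨Clause.drop x E, ?_, Finset.filter_subset_filter _ hsub⟩)
      simp only [List.nil_append, List.mem_map, List.mem_filter]
      exact ⟨E, ⟨hE, decide_eq_true (fun h => hPD' (hsub h))⟩, rfl⟩
    · by_cases hxy : y = x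
      · subst hxy
        -- resolution on the restricted variable: weakening from the falsified side
        rcases Bool.eq_false_or_eq_true ε with hε | hε
        · -- ε = true : C₂ has (y,false) falsified; weaken from drop of C₂
          subst hε
          have hC₂P : Clause.Proper C₂ := (hprev C₂ h₂).1
          have hno : (y, true) ∉ C₂ := fun h => hC₂P y ⟨h, hy₂⟩
          refine Or.inr (Or.inl ⟨Clause.drop y C₂, ?_, ?_⟩)
          · simp only [List.nil_append, List.mem_map, List.mem_filter]
            exact ⟨C₂, ⟨h₂, decide_eq_true hno⟩, rfl⟩
          · intro l hl
            have hl' := Finset.mem_filter.1 hl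
            have hlD : l ∈ D := by
              rw [hDeq]
              exact Finset.mem_union_right _
                (Finset.mem_erase.2 ⟨by
                  intro h; rw [h] at hl'; exact hl'.2 rfl, hl'.1⟩)
            exact Finset.mem_filter.2 ⟨hlD, hl'.2⟩
        · -- ε = false : C₁ has (y,true) falsified; weaken from drop of C₁
          subst hε
          have hC₁P : Clause.Proper C₁ := (hprev C₁ h₁).1
          have hno : (y, false) ∉ C₁ := fun h => hC₁P y ⟨hy₁, h⟩
          refine Or.inr (Or.inl ⟨Clause.drop y C₁, ?_, ?_⟩)
          · simp only [List.nil_append, List.mem_map, List.mem_filter]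
            exact ⟨C₁, ⟨h₁, decide_eq_true hno⟩, rfl⟩
          · intro l hl
            have hl' := Finset.mem_filter.1 hl
            have hlD : l ∈ D := by
              rw [hDeq]
              exact Finset.mem_union_left _
                (Finset.mem_erase.2 ⟨by
                  intro h; rw [h] at hl'; exact hl'.2 rfl, hl'.1⟩)
            exact Finset.mem_filter.2 ⟨hlD, hl'.2⟩
      · -- resolution on another variable survives
        have hs₁ : (x, ε) ∉ C₁ := by
          intro h
          exact hPD' (hDeq ▸ Finset.mem_union_left _
            (Finset.mem_erase.2 ⟨fun he => hxy (congrArg Prod.fst he).symm, h⟩))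
        have hs₂ : (x, ε) ∉ C₂ := by
          intro h
          exact hPD' (hDeq ▸ Finset.mem_union_right _
            (Finset.mem_erase.2 ⟨fun he => hxy (congrArg Prod.fst he).symm, h⟩))
        refine Or.inr (Or.inr ⟨Clause.drop x C₁, ?_, Clause.drop x C₂, ?_, y, ?_, ?_, ?_, ?_, ?_⟩)
        · simp only [List.nil_append, List.mem_map, List.mem_filter]
          exact ⟨C₁, ⟨h₁, decide_eq_true hs₁⟩, rfl⟩
        · simp only [List.nil_append, List.mem_map, List.mem_filter]
          exact ⟨C₂, ⟨h₂, decide_eq_true hs₂⟩, rfl⟩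
        · exact Finset.mem_filter.2 ⟨hy₁, by simpa using hxy⟩
        · exact Finset.mem_filter.2 ⟨hy₂, by simpa using hxy⟩
        · unfold Clause.drop
          rw [hDeq, Finset.filter_union, Finset.filter_erase, Finset.filter_erase]
        · exact fun h => hn₁ (Finset.filter_subset _ _ h)
        · exact fun h => hn₂ (Finset.filter_subset _ _ h)

lemma proj_goodI {K : CNF} {V : Finset Var} (hKV : ∀ C ∈ K, ∀ l ∈ C, l.1 ∈ V)
    {L : List Clause} (hL : GoodI K L) : GoodI K (projList V L) := by
  have main := goodI_sim (K := K) (K' := K) (fun C => C.filter (fun l => l.1 ∈ V))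
    (fun _ => true) (fun _ => True) [] GoodI.nil
    (fun D hD _ _ => proper_of_subset (Finset.filter_subset _ _) hD)
    ?_ L hL (fun _ _ => trivial)
  · simpa [projList] using main
  · intro prev D hprev hD _ _ hres
    rcases hres with h | ⟨E, hE, hsub⟩ | ⟨C₁, h₁, C₂, h₂, y, hy₁, hy₂, hDeq, hn₁, hn₂⟩
    · have hfix : (fun C => C.filter (fun l => l.1 ∈ V)) D = D :=
        Finset.filter_eq_self.2 (hKV D h)
      rw [show D.filter (fun l => l.1 ∈ V) = D from hfix]; exact Or.inl h
    · exact Or.inr (Or.inl ⟨E.filter (fun l => l.1 ∈ V),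
        List.mem_append_right _ (List.mem_map_of_mem (List.mem_filter.2 ⟨hE, rfl⟩)),
        Finset.filter_subset_filter _ hsub⟩)
    · by_cases hyV : y ∈ V
      · refine Or.inr (Or.inr ⟨C₁.filter (fun l => l.1 ∈ V), ?_, C₂.filter (fun l => l.1 ∈ V),
          ?_, y, ?_, ?_, ?_, ?_, ?_⟩)
        · exact List.mem_append_right _ (List.mem_map_of_mem (List.mem_filter.2 ⟨h₁, rfl⟩))
        · exact List.mem_append_right _ (List.mem_map_of_mem (List.mem_filter.2 ⟨h₂, rfl⟩))
        · exact Finset.mem_filter.2 ⟨hy₁, hyV⟩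
        · exact Finset.mem_filter.2 ⟨hy₂, hyV⟩
        · simp only [hDeq, Finset.filter_union, Finset.filter_erase]
        · exact fun h => hn₁ (Finset.filter_subset _ _ h)
        · exact fun h => hn₂ (Finset.filter_subset _ _ h)
      · -- resolution variable got projected away: weakening from C₁
        refine Or.inr (Or.inl ⟨C₁.filter (fun l => l.1 ∈ V),
          List.mem_append_right _ (List.mem_map_of_mem (List.mem_filter.2 ⟨h₁, rfl⟩)), ?_⟩)
        · intro l hl
          have hl' := Finset.mem_filter.1 hl
          have : l ∈ D := by
            rw [hDeq]
            refine Finset.mem_union_left _ (Finset.mem_erase.2 ⟨?_, hl'.1⟩)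
            intro h; rw [h] at hl'; exact hyV hl'.2
          exact Finset.mem_filter.2 ⟨this, hl'.2⟩

end Aux3
section Aux4

lemma goodI_replay {K R : CNF} {B M : List Clause} (hB : GoodI K B)
    (hcov : ∀ C' ∈ R, ∃ E ∈ B, E ⊆ C') (hM : GoodI R M) : GoodI K (B ++ M) := by
  have main := goodI_sim (K := R) (K' := K) id (fun _ => true) (fun _ => True) B hB
    (fun D hD _ _ => hD) ?_ M hM (fun _ _ => trivial)
  · simpa using main
  · intro prev D hprev hD _ _ hres
    rcases hres with h | h
    · rcases hcov D h with ⟨E, hE, hsub⟩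
      exact Or.inr (Or.inl ⟨E, List.mem_append_left _ hE, hsub⟩)
    · refine resStep_mono ?_ (Or.inr h : ResStep K prev D)
      intro C hC
      refine List.mem_append_right _ ?_
      simpa using hC

lemma lift_goodI {K : CNF} {x : Var} {ε : Bool} {M : List Clause} (hK : CNF.Proper K)
    (hM : GoodI (K.restrict x ε) M) (hMx : ∀ C ∈ M, ∀ b : Bool, (x, b) ∉ C) :
    GoodI K (K.toList ++ M.map (fun C => insert (x, !ε) C)) := by
  have hB : GoodI K K.toList := goodI_axioms hK (fun C hC => Finset.mem_toList.1 hC)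
  have main := goodI_sim (K := K.restrict x ε) (K' := K) (fun C => insert (x, !ε) C)
    (fun _ => true) (fun C => ∀ b : Bool, (x, b) ∉ C) K.toList hB ?_ ?_ M hM hMx
  · simpa using main
  · -- properness of lifted clauses
    intro D hD hQ _
    intro v hv
    rcases Finset.mem_insert.1 hv.1 with h1 | h1
    · rcases Finset.mem_insert.1 hv.2 with h2 | h2
      · rw [Prod.ext_iff] at h1 h2
        have := h1.2.trans h2.2.symm
        simp at this
      · have hvx : v = x := (Prod.ext_iff.1 h1).1
        exact hQ false (hvx ▸ h2)
    · rcases Finset.mem_insert.1 hv.2 with h2 | h2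
      · have hvx : v = x := (Prod.ext_iff.1 h2).1
        exact hQ true (hvx ▸ h1)
      · exact hD v ⟨h1, h2⟩
  · intro prev D hprev hD hQD _ hres
    rcases hres with h | ⟨E, hE, hsub⟩ | ⟨C₁, h₁, C₂, h₂, y, hy₁, hy₂, hDeq, hn₁, hn₂⟩
    · -- axiom of the restricted CNF: weakening from the original clause
      rcases mem_restrict.1 h with ⟨C, hC, hCx, rfl⟩
      refine Or.inr (Or.inl ⟨C, List.mem_append_left _ (Finset.mem_toList.2 hC), ?_⟩)
      intro l hl
      obtain ⟨lv, lb⟩ := l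
      by_cases hlx : lv = x
      · subst hlx
        have hlb : lb = !ε := by cases ε <;> cases lb <;> simp_all
        subst hlb
        exact Finset.mem_insert_self _ _
      · exact Finset.mem_insert_of_mem (Finset.mem_filter.2 ⟨hl, by simpa using hlx⟩)
    · refine Or.inr (Or.inl ⟨insert (x, !ε) E, ?_, Finset.insert_subset_insert _ hsub⟩)
      refine List.mem_append_right _ ?_
      simp only [List.filter_true]
      exact List.mem_map_of_mem hE
    · -- resolution; the resolved variable is not x
      have hQ₁ : ∀ b : Bool, (x, b) ∉ C₁ := (hprev C₁ h₁).2
      have hyx : y ≠ x := by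
        intro h
        exact hQ₁ true (h ▸ hy₁)
      refine Or.inr (Or.inr ⟨insert (x, !ε) C₁, ?_, insert (x, !ε) C₂, ?_, y, ?_, ?_, ?_, ?_, ?_⟩)
      · refine List.mem_append_right _ ?_
        simp only [List.filter_true]
        exact List.mem_map_of_mem h₁
      · refine List.mem_append_right _ ?_
        simp only [List.filter_true]
        exact List.mem_map_of_mem h₂
      · exact Finset.mem_insert_of_mem hy₁
      · exact Finset.mem_insert_of_mem hy₂
      · have e₁ : (insert (x, !ε) C₁).erase (y, true) = insert (x, !ε) (C₁.erase (y, true)) :=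
          Finset.erase_insert_of_ne (by intro h; exact hyx ((Prod.ext_iff.1 h).1.symm))
        have e₂ : (insert (x, !ε) C₂).erase (y, false) = insert (x, !ε) (C₂.erase (y, false)) :=
          Finset.erase_insert_of_ne (by intro h; exact hyx ((Prod.ext_iff.1 h).1.symm))
        rw [e₁, e₂, Finset.insert_union, Finset.union_insert, hDeq, Finset.insert_idem]
      · intro h
        rcases Finset.mem_insert.1 h with h' | h'
        · exact hyx ((Prod.ext_iff.1 h').1)
        · exact hn₁ h'
      · intro h
        rcases Finset.mem_insert.1 h with h' | h'
        · exact hyx ((Prod.ext_iff.1 h').1)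
        · exact hn₂ h'

end Aux4
section Aux5

lemma isResRefutation_iff {K : CNF} {L : List Clause} :
    IsResRefutation K L ↔ GoodI K L ∧ ∃ L', L = L' ++ [∅] := by
  unfold IsResRefutation
  rw [isResDerivation_iff]
  constructor
  · rintro ⟨h1, h2, h3⟩
    exact ⟨h3, List.getLast?_eq_some_iff.1 h2⟩
  · rintro ⟨h1, L', rfl⟩
    exact ⟨by simp, List.getLast?_concat, h1⟩

lemma restrictList_concat_empty (x : Var) (ε : Bool) (L' : List Clause) :
    restrictList x ε (L' ++ [∅]) = restrictList x ε L' ++ [∅] := by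
  unfold restrictList
  rw [List.filter_append, List.map_append]
  simp [Clause.drop]

lemma projList_concat_empty (V : Finset Var) (L' : List Clause) :
    projList V (L' ++ [∅]) = projList V L' ++ [∅] := by
  unfold projList
  rw [List.map_append]
  simp

lemma projList_clean {V : Finset Var} {L : List Clause} :
    ∀ C ∈ projList V L, ∀ l ∈ C, l.1 ∈ V := by
  intro C hC l hl
  rcases List.mem_map.1 hC with ⟨C₀, -, rfl⟩
  exact (Finset.mem_filter.1 hl).2

lemma branch_refutation {K : CNF} {L : List Clause} (x : Var) (ε : Bool)
    (hL : IsResRefutation K L) :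
    IsResRefutation (K.restrict x ε)
      (projList (CNF.vars (K.restrict x ε)) (restrictList x ε L)) := by
  rcases isResRefutation_iff.1 hL with ⟨hG, L', rfl⟩
  rw [isResRefutation_iff]
  constructor
  · refine proj_goodI ?_ (restrict_goodI hG)
    intro C hC l hl
    exact mem_vars.2 ⟨C, hC, l, hl, rfl⟩
  · exact ⟨_, by rw [restrictList_concat_empty, projList_concat_empty]⟩

lemma listWidth_mem_le {L : List Clause} {C : Clause} (h : C ∈ L) : C.card ≤ listWidth L :=
  listWidth_le_iff.1 le_rfl C h

noncomputable def liftList (K : CNF) (x : Var) (ε : Bool) (M : List Clause) : List Clause :=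
  K.toList ++ (projList (CNF.vars (K.restrict x ε)) M).map (fun C => insert (x, !ε) C)

lemma liftList_good {K : CNF} {x : Var} {ε : Bool} {M : List Clause}
    (hK : CNF.Proper K) (hM : IsResRefutation (K.restrict x ε) M) :
    GoodI K (liftList K x ε M) ∧ (liftList K x ε M).getLast? = some {(x, !ε)} := by
  classical
  set V := CNF.vars (K.restrict x ε) with hV
  have hMG : GoodI (K.restrict x ε) (projList V M) := by
    rcases isResRefutation_iff.1 hM with ⟨hG, L', rfl⟩
    exact proj_goodI (fun C hC l hl => mem_vars.2 ⟨C, hC, l, hl, rfl⟩) hG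
  have hclean : ∀ C ∈ projList V M, ∀ b : Bool, (x, b) ∉ C := by
    intro C hC b hb
    exact x_notMem_restrict_vars (x := x) (ε := ε) (K := K) (projList_clean C hC (x, b) hb)
  constructor
  · exact lift_goodI hK hMG hclean
  · rcases isResRefutation_iff.1 hM with ⟨-, L', rfl⟩
    unfold liftList
    rw [← hV, projList_concat_empty, List.map_append, ← List.append_assoc]
    simp

lemma liftList_width {K : CNF} {x : Var} {ε : Bool} {M : List Clause} {r W : ℕ}
    (hKw : ∀ C ∈ K, C.card ≤ r) (hMw : listWidth M ≤ W) :
    ∀ C ∈ liftList K x ε M, C.card ≤ max r (W + 1) := by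
  intro C hC
  rcases List.mem_append.1 hC with hC | hC
  · exact le_trans (hKw C (Finset.mem_toList.1 hC)) (le_max_left _ _)
  · rcases List.mem_map.1 hC with ⟨C₀, hC₀, rfl⟩
    rcases List.mem_map.1 hC₀ with ⟨C₁, hC₁, rfl⟩
    refine le_trans (Finset.card_insert_le _ _) (le_trans ?_ (le_max_right _ _))
    have h1 : (C₁.filter (fun l => l.1 ∈ CNF.vars (K.restrict x ε))).card ≤ C₁.card :=
      Finset.card_le_card (Finset.filter_subset _ _)
    have h2 : C₁.card ≤ W := le_trans (listWidth_mem_le hC₁) hMw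
    omega

end Aux5
section Aux6

/-- Number of fat clauses (width > d) in a list. -/
def fatCount (d : ℕ) (L : List Clause) : ℕ :=
  (L.filter (fun C => decide (d < C.card))).length

/-- Number of fat clauses containing a given literal. -/
def cnt (d : ℕ) (l : Lit) (L : List Clause) : ℕ :=
  ((L.filter (fun C => decide (d < C.card))).filter (fun C => decide (l ∈ C))).length

lemma fatCount_le_length (d : ℕ) (L : List Clause) : fatCount d L ≤ L.length :=
  List.length_filter_le _ _

lemma fatCount_map_le {f : Clause → Clause} (hf : ∀ C, (f C).card ≤ C.card) (d : ℕ)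
    (L : List Clause) : fatCount d (L.map f) ≤ fatCount d L := by
  induction L with
  | nil => simp [fatCount]
  | cons C L ih =>
      have h3 : d < (f C).card → d < C.card := fun h => lt_of_lt_of_le h (hf C)
      by_cases h1 : d < (f C).card <;> by_cases h2 : d < C.card <;>
        simp_all [fatCount, List.filter_cons, h1, h2] <;> omega

lemma fatCount_filter_add_cnt (d : ℕ) (x : Var) (ε : Bool) (L : List Clause) :
    fatCount d (L.filter (fun C => decide ((x, ε) ∉ C))) + cnt d (x, ε) L ≤ fatCount d L := by
  induction L with
  | nil => simp [fatCount, cnt]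
  | cons C L ih =>
      by_cases h1 : d < C.card <;> by_cases h2 : (x, ε) ∈ C <;>
        simp_all [fatCount, cnt, List.filter_cons, h1, h2] <;> omega

lemma fatCount_restrictList (d : ℕ) (x : Var) (ε : Bool) (L : List Clause) :
    fatCount d (restrictList x ε L) + cnt d (x, ε) L ≤ fatCount d L := by
  have h1 : fatCount d (restrictList x ε L) ≤
      fatCount d (L.filter (fun C => decide ((x, ε) ∉ C))) :=
    fatCount_map_le (fun C => Finset.card_le_card (Clause.drop_subset x C)) d _
  have := fatCount_filter_add_cnt d x ε L
  omega

lemma list_mul_le_sum {l : List Clause} {g : Clause → ℕ} {m : ℕ} (h : ∀ a ∈ l, m ≤ g a) :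
    m * l.length ≤ (l.map g).sum := by
  induction l with
  | nil => simp
  | cons a l ih =>
      rw [List.map_cons, List.sum_cons, List.length_cons, Nat.mul_succ]
      have := ih (fun b hb => h b (List.mem_cons_of_mem a hb))
      have := h a (List.mem_cons_self)
      omega

lemma list_sum_comm {l : List Clause} {s : Finset Lit} {f : Lit → Clause → ℕ} :
    (l.map (fun C => ∑ x ∈ s, f x C)).sum = ∑ x ∈ s, (l.map (f x)).sum := by
  induction l with
  | nil => simp
  | cons a l ih =>
      rw [List.map_cons, List.sum_cons, ih, ← Finset.sum_add_distrib]
      simp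

lemma length_filter_eq_sum (l : List Clause) (p : Clause → Prop) [DecidablePred p] :
    (l.filter (fun C => decide (p C))).length = (l.map (fun C => if p C then 1 else 0)).sum := by
  induction l with
  | nil => simp
  | cons a l ih =>
      rw [List.filter_cons, List.map_cons, List.sum_cons]
      by_cases h : p a <;> simp [h, ih] <;> omega

lemma pigeonhole {n d : ℕ} (hn : 1 ≤ n) {K' : CNF} (hv : (CNF.vars K').card ≤ n)
    {L : List Clause} (hclean : ∀ C ∈ L, ∀ l ∈ C, l.1 ∈ CNF.vars K')
    (hF : 1 ≤ fatCount d L) :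
    ∃ x : Var, ∃ ε : Bool, x ∈ CNF.vars K' ∧
      (d + 1) * fatCount d L ≤ 2 * n * cnt d (x, ε) L := by
  classical
  set Lits : Finset Lit := (CNF.vars K') ×ˢ (Finset.univ : Finset Bool) with hLits
  set fatL : List Clause := L.filter (fun C => decide (d < C.card)) with hfatL
  have hsub : ∀ C ∈ fatL, d + 1 ≤ C.card ∧ C ⊆ Lits := by
    intro C hC
    have h := List.mem_filter.1 hC
    refine ⟨of_decide_eq_true h.2, ?_⟩
    intro l hl
    exact Finset.mem_product.2 ⟨hclean C h.1 l hl, Finset.mem_univ _⟩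
  have hcard : Lits.card ≤ 2 * n := by
    rw [hLits, Finset.card_product]
    simp only [Finset.card_univ, Fintype.card_bool]
    omega
  have hB : (d + 1) * fatL.length ≤ (fatL.map Finset.card).sum :=
    list_mul_le_sum (fun C hC => (hsub C hC).1)
  have hC2 : (fatL.map Finset.card).sum = ∑ l ∈ Lits, (fatL.map (fun C => if l ∈ C then 1 else 0)).sum := by
    rw [← list_sum_comm]
    congr 1
    apply List.map_congr_left
    intro C hC
    have h1 : Lits.filter (fun l => l ∈ C) = C := by
      rw [Finset.filter_mem_eq_inter]
      exact Finset.inter_eq_right.2 (hsub C hC).2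
    rw [Finset.sum_boole, h1, Nat.cast_id]
  have hcnt : ∀ l : Lit, cnt d l L = (fatL.map (fun C => if l ∈ C then 1 else 0)).sum := by
    intro l
    rw [← length_filter_eq_sum fatL (fun C => l ∈ C)]
    rfl
  by_contra hcon
  push_neg at hcon
  have hall : ∀ l ∈ Lits, 2 * n * cnt d l L < (d + 1) * fatCount d L := by
    intro l hl
    rcases Finset.mem_product.1 hl with ⟨h1, -⟩
    exact hcon l.1 l.2 h1
  set A := (d + 1) * fatCount d L with hA
  have hA1 : 1 ≤ A := by
    have : 1 ≤ d + 1 := by omega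
    calc 1 = 1 * 1 := by omega
    _ ≤ A := Nat.mul_le_mul this hF
  have hT : A ≤ ∑ l ∈ Lits, cnt d l L := by
    have : (d + 1) * fatCount d L ≤ ∑ l ∈ Lits, (fatL.map (fun C => if l ∈ C then 1 else 0)).sum := by
      rw [← hC2]
      exact hB
    rw [hA]
    simpa only [← hcnt] using this
  have hsum : ∑ l ∈ Lits, (2 * n * cnt d l L) ≤ Lits.card * (A - 1) := by
    apply Finset.sum_le_card_nsmul
    intro l hl
    have := hall l hl
    omega
  rw [← Finset.mul_sum] at hsum
  have h2n : 2 * n * A ≤ 2 * n * (A - 1) := by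
    calc 2 * n * A ≤ 2 * n * ∑ l ∈ Lits, cnt d l L := Nat.mul_le_mul_left _ hT
    _ ≤ Lits.card * (A - 1) := hsum
    _ ≤ 2 * n * (A - 1) := Nat.mul_le_mul_right _ hcard
  have := Nat.le_of_mul_le_mul_left h2n (by omega : 0 < 2 * n)
  omega

end Aux6
section Aux7

lemma clauseVars_subset {K : CNF} {C : Clause} (hC : C ∈ K) : Clause.vars C ⊆ CNF.vars K := by
  intro v hv
  exact Finset.le_sup (f := Clause.vars) hC hv

lemma restrict_unsat {K : CNF} (hU : CNF.Unsat K) (x : Var) (ε : Bool) :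
    CNF.Unsat (K.restrict x ε) := by
  intro ⟨a, ha⟩
  apply hU
  refine ⟨Function.update a x ε, ?_⟩
  intro C hC
  by_cases hx : (x, ε) ∈ C
  · refine ⟨(x, ε), hx, ?_⟩
    unfold Lit.eval
    rcases Bool.eq_false_or_eq_true ε with hε | hε <;> subst hε <;>
      simp [Function.update_self]
  · have hC' : Clause.drop x C ∈ K.restrict x ε := mem_restrict.2 ⟨C, hC, hx, rfl⟩
    rcases ha _ hC' with ⟨l, hl, hev⟩
    have hlx : l.1 ≠ x := by simpa using (Finset.mem_filter.1 hl).2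
    refine ⟨l, (Finset.mem_filter.1 hl).1, ?_⟩
    unfold Lit.eval at hev ⊢
    rw [Function.update_of_ne hlx]
    exact hev

lemma empty_mem_of_unsat_no_vars {K : CNF} (hU : CNF.Unsat K) (h0 : CNF.vars K = ∅) :
    (∅ : Clause) ∈ K := by
  have hne : K.Nonempty := by
    by_contra h
    rw [Finset.not_nonempty_iff_eq_empty] at h
    exact hU ⟨fun _ => false, by simp [h, CNF.Sat]⟩
  rcases hne with ⟨C, hC⟩
  have : C = ∅ := by
    rw [Finset.eq_empty_iff_forall_notMem]
    intro l hl
    have : l.1 ∈ CNF.vars K := clauseVars_subset hC (Finset.mem_image_of_mem _ hl)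
    rw [h0] at this
    exact absurd this (Finset.notMem_empty _)
  rwa [this] at hC

lemma singleton_refutation {K : CNF} (h : (∅ : Clause) ∈ K) : IsResRefutation K [∅] := by
  rw [isResRefutation_iff]
  refine ⟨?_, [], rfl⟩
  have := GoodI.snoc (K := K) [] ∅ GoodI.nil proper_empty (Or.inl h)
  simpa using this

lemma combine_refutation {K : CNF} {A₁ A₂ : List Clause} {x : Var}
    (h₁ : GoodI K A₁) (h₂ : GoodI K A₂)
    (hl₁ : A₁.getLast? = some {(x, false)}) (hl₂ : A₂.getLast? = some {(x, true)}) :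
    IsResRefutation K ((A₁ ++ A₂) ++ [∅]) := by
  rw [isResRefutation_iff]
  refine ⟨?_, _, rfl⟩
  refine GoodI.snoc _ _ (goodI_append h₁ h₂) proper_empty ?_
  rcases List.getLast?_eq_some_iff.1 hl₁ with ⟨B₁, rfl⟩
  rcases List.getLast?_eq_some_iff.1 hl₂ with ⟨B₂, rfl⟩
  refine Or.inr (Or.inr ⟨{(x, true)}, by simp, {(x, false)}, by simp, x, by simp, by simp,
    ?_, by simp, by simp⟩)
  rw [Finset.erase_singleton, Finset.erase_singleton]
  simp

lemma exists_refutation : ∀ N : ℕ, ∀ K : CNF, (CNF.vars K).card ≤ N → CNF.Proper K →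
    CNF.Unsat K → ∃ L, IsResRefutation K L := by
  intro N
  induction N with
  | zero =>
      intro K hcard hP hU
      have h0 : CNF.vars K = ∅ := Finset.card_eq_zero.1 (Nat.le_zero.1 hcard)
      exact ⟨[∅], singleton_refutation (empty_mem_of_unsat_no_vars hU h0)⟩
  | succ N ih =>
      intro K hcard hP hU
      rcases Finset.eq_empty_or_nonempty (CNF.vars K) with h0 | ⟨x, hx⟩
      · exact ⟨[∅], singleton_refutation (empty_mem_of_unsat_no_vars hU h0)⟩
      · have hrc : ∀ ε : Bool, (CNF.vars (K.restrict x ε)).card ≤ N := by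
          intro ε
          have h1 : (CNF.vars (K.restrict x ε)).card ≤ ((CNF.vars K).erase x).card :=
            Finset.card_le_card restrict_vars
          have h2 : ((CNF.vars K).erase x).card < (CNF.vars K).card :=
            Finset.card_erase_lt_of_mem hx
          omega
        obtain ⟨L₁, hL₁⟩ := ih (K.restrict x true) (hrc true) (restrict_proper hP x true)
          (restrict_unsat hU x true)
        obtain ⟨L₂, hL₂⟩ := ih (K.restrict x false) (hrc false) (restrict_proper hP x false)
          (restrict_unsat hU x false)
        obtain ⟨hG₁, hlast₁⟩ := liftList_good hP hL₁
        obtain ⟨hG₂, hlast₂⟩ := liftList_good hP hL₂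
        exact ⟨_, combine_refutation hG₁ hG₂ (by simpa using hlast₁) (by simpa using hlast₂)⟩

end Aux7
section Aux8

lemma drop_eq_erase {C : Clause} {x : Var} {ε : Bool} (h : (x, !ε) ∉ C) :
    Clause.drop x C = C.erase (x, ε) := by
  ext l
  obtain ⟨v, b⟩ := l
  simp only [Clause.drop, Finset.mem_filter, Finset.mem_erase]
  constructor
  · rintro ⟨h1, h2⟩
    refine ⟨fun he => ?_, h1⟩
    have : v = x := congrArg Prod.fst he
    simp_all
  · rintro ⟨h1, h2⟩
    refine ⟨h2, ?_⟩
    intro hvx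
    have hvx' : v = x := hvx
    subst hvx'
    have hb : b = !ε := by
      cases b <;> cases ε <;> simp_all
    rw [hb] at h2
    exact h h2

lemma drop_eq_self {C : Clause} {x : Var} (h : ∀ b : Bool, (x, b) ∉ C) :
    Clause.drop x C = C := by
  apply Finset.filter_eq_self.2
  intro l hl
  intro hlx
  obtain ⟨v, b⟩ := l
  simp only at hlx
  subst hlx
  exact h b hl

lemma width_of_no_fat {K' : CNF} {L : List Clause} {r d t : ℕ}
    (hL : IsResRefutation K' L) (h0 : fatCount d L = 0) :
    ∃ M, IsResRefutation K' M ∧ listWidth M ≤ r + d + t := by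
  refine ⟨L, hL, ?_⟩
  have hall : ∀ C ∈ L, C.card ≤ d := by
    intro C hC
    have := List.filter_eq_nil_iff.1 (List.length_eq_zero_iff.1 h0) C hC
    simp only [decide_eq_true_eq] at this
    omega
  refine le_trans (listWidth_le_iff.2 hall) (by omega)

lemma fat_pos_vars_nonempty {K' : CNF} {L : List Clause} {d : ℕ}
    (hclean : ∀ C ∈ L, ∀ l ∈ C, l.1 ∈ CNF.vars K') (hF : 1 ≤ fatCount d L) :
    (CNF.vars K').Nonempty := by
  have hne : L.filter (fun C => decide (d < C.card)) ≠ [] := by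
    intro h
    rw [fatCount, h] at hF
    simp at hF
  rcases List.exists_mem_of_ne_nil _ hne with ⟨C, hC⟩
  have h1 := List.mem_filter.1 hC
  have h2 : 0 < C.card := by
    have := of_decide_eq_true h1.2
    omega
  rcases Finset.card_pos.1 h2 with ⟨l, hl⟩
  exact ⟨l.1, hclean C h1.1 l hl⟩

lemma main_width (n r d : ℕ) (hn : 1 ≤ n) :
    ∀ t : ℕ, ∀ K' : CNF, ∀ F : ℕ, CNF.Proper K' → (CNF.vars K').card ≤ n →
      (∀ C ∈ K', C.card ≤ r) →
      (∃ L, IsResRefutation K' L ∧ (∀ C ∈ L, ∀ l ∈ C, l.1 ∈ CNF.vars K') ∧ fatCount d L ≤ F) →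
      (2 * n - (d + 1)) ^ t * F < (2 * n) ^ t →
      ∃ M, IsResRefutation K' M ∧ listWidth M ≤ r + d + t := by
  intro t
  induction t with
  | zero =>
      rintro K' F hP hv hw ⟨L, hL, hclean, hfat⟩ hnum
      simp only [pow_zero, one_mul] at hnum
      exact width_of_no_fat hL (by omega)
  | succ t ih =>
      suffices H : ∀ m : ℕ, ∀ K' : CNF, ∀ F : ℕ, (CNF.vars K').card ≤ m →
          CNF.Proper K' → (CNF.vars K').card ≤ n → (∀ C ∈ K', C.card ≤ r) →
          (∃ L, IsResRefutation K' L ∧ (∀ C ∈ L, ∀ l ∈ C, l.1 ∈ CNF.vars K') ∧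
            fatCount d L ≤ F) →
          (2 * n - (d + 1)) ^ (t + 1) * F < (2 * n) ^ (t + 1) →
          ∃ M, IsResRefutation K' M ∧ listWidth M ≤ r + d + (t + 1) by
        intro K' F h1 h2 h3 h4 h5
        exact H (CNF.vars K').card K' F le_rfl h1 h2 h3 h4 h5
      intro m
      induction m with
      | zero =>
          rintro K' F hm hP hv hw ⟨L, hL, hclean, hfat⟩ hnum
          by_cases hF0 : fatCount d L = 0
          · exact width_of_no_fat hL hF0
          · exfalso
            have h1 : 1 ≤ fatCount d L := Nat.one_le_iff_ne_zero.2 hF0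
            obtain ⟨v, hv'⟩ := fat_pos_vars_nonempty hclean h1
            have h2 : 0 < (CNF.vars K').card := Finset.card_pos.2 ⟨v, hv'⟩
            omega
      | succ m ihm =>
          rintro K' F hm hP hv hw ⟨L, hL, hclean, hfat⟩ hnum
          by_cases hF0 : fatCount d L = 0
          · exact width_of_no_fat hL hF0
          have hF1 : 1 ≤ fatCount d L := by omega
          obtain ⟨x, ε, hxv, hheavy⟩ := pigeonhole hn hv hclean hF1
          -- ### branch x := ε ###
          set K₁ := K'.restrict x ε with hK₁
          set L₁ := projList (CNF.vars K₁) (restrictList x ε L) with hL₁def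
          have hL₁ : IsResRefutation K₁ L₁ := branch_refutation x ε hL
          have hclean₁ : ∀ C ∈ L₁, ∀ l ∈ C, l.1 ∈ CNF.vars K₁ := projList_clean
          have hfat₁le : fatCount d L₁ ≤ fatCount d (restrictList x ε L) :=
            fatCount_map_le (fun C => Finset.card_le_card (Finset.filter_subset _ _)) d _
          have hrestr := fatCount_restrictList d x ε L
          have hkey : 2 * n * fatCount d L₁ ≤ (2 * n - (d + 1)) * fatCount d L := by
            have e1 : (2 * n - (d + 1)) * fatCount d L
                = 2 * n * fatCount d L - (d + 1) * fatCount d L := Nat.sub_mul _ _ _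
            have e2 : 2 * n * (fatCount d (restrictList x ε L) + cnt d (x, ε) L)
                ≤ 2 * n * fatCount d L := Nat.mul_le_mul_left _ hrestr
            have e3 : 2 * n * fatCount d L₁ ≤ 2 * n * fatCount d (restrictList x ε L) :=
              Nat.mul_le_mul_left _ hfat₁le
            rw [Nat.mul_add] at e2
            omega
          have hnum₁ : (2 * n - (d + 1)) ^ t * fatCount d L₁ < (2 * n) ^ t := by
            have hmono : (2 * n - (d + 1)) ^ (t + 1) * fatCount d L
                ≤ (2 * n - (d + 1)) ^ (t + 1) * F := Nat.mul_le_mul_left _ hfat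
            have h1 : (2 * n - (d + 1)) ^ t * (2 * n * fatCount d L₁)
                ≤ (2 * n - (d + 1)) ^ t * ((2 * n - (d + 1)) * fatCount d L) :=
              Nat.mul_le_mul_left _ hkey
            have h2 : (2 * n - (d + 1)) ^ t * ((2 * n - (d + 1)) * fatCount d L)
                = (2 * n - (d + 1)) ^ (t + 1) * fatCount d L := by ring
            have h3 : (2 * n) ^ (t + 1) = 2 * n * (2 * n) ^ t := by ring
            have h4 : (2 * n - (d + 1)) ^ t * (2 * n * fatCount d L₁)
                = 2 * n * ((2 * n - (d + 1)) ^ t * fatCount d L₁) := by ring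
            have hlt : 2 * n * ((2 * n - (d + 1)) ^ t * fatCount d L₁)
                < 2 * n * (2 * n) ^ t := by
              rw [← h4, ← h3]
              calc (2 * n - (d + 1)) ^ t * (2 * n * fatCount d L₁)
                  ≤ (2 * n - (d + 1)) ^ (t + 1) * fatCount d L := by rw [← h2]; exact h1
                _ ≤ (2 * n - (d + 1)) ^ (t + 1) * F := hmono
                _ < (2 * n) ^ (t + 1) := hnum
            exact Nat.lt_of_mul_lt_mul_left hlt
          have hv₁ : (CNF.vars K₁).card ≤ n :=
            le_trans (Finset.card_le_card restrict_vars)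
              (le_trans (Finset.card_erase_le) hv)
          obtain ⟨M₁, hM₁, hM₁w⟩ := ih K₁ (fatCount d L₁) (restrict_proper hP x ε) hv₁
            (restrict_width hw x ε) ⟨L₁, hL₁, hclean₁, le_rfl⟩ hnum₁
          obtain ⟨hGA, hlastA⟩ := liftList_good hP hM₁
          have hAw : ∀ C ∈ liftList K' x ε M₁, C.card ≤ max r (r + d + t + 1) :=
            liftList_width hw hM₁w
          set A := liftList K' x ε M₁ with hAdef
          set u : Clause := {(x, !ε)} with hu
          -- ### branch x := !ε ###
          set K₂ := K'.restrict x (!ε) with hK₂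
          set L₂ := projList (CNF.vars K₂) (restrictList x (!ε) L) with hL₂def
          have hL₂ : IsResRefutation K₂ L₂ := branch_refutation x (!ε) hL
          have hfat₂ : fatCount d L₂ ≤ F := by
            have h1 : fatCount d L₂ ≤ fatCount d (restrictList x (!ε) L) :=
              fatCount_map_le (fun C => Finset.card_le_card (Finset.filter_subset _ _)) d _
            have h2 := fatCount_restrictList d x (!ε) L
            omega
          have hv₂m : (CNF.vars K₂).card ≤ m := by
            have h1 : (CNF.vars K₂).card ≤ ((CNF.vars K').erase x).card :=
              Finset.card_le_card restrict_vars
            have h2 : ((CNF.vars K').erase x).card = (CNF.vars K').card - 1 :=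
              Finset.card_erase_of_mem hxv
            have h3 : 1 ≤ (CNF.vars K').card := Finset.card_pos.2 ⟨x, hxv⟩
            omega
          have hv₂ : (CNF.vars K₂).card ≤ n :=
            le_trans (Finset.card_le_card restrict_vars)
              (le_trans (Finset.card_erase_le) hv)
          obtain ⟨M₂, hM₂, hM₂w⟩ := ihm K₂ F hv₂m (restrict_proper hP x (!ε)) hv₂
            (restrict_width hw x (!ε)) ⟨L₂, hL₂, projList_clean, hfat₂⟩ hnum
          -- ### combine ###
          have huA : u ∈ A := by
            rcases List.getLast?_eq_some_iff.1 hlastA with ⟨A', hA'⟩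
            rw [hA']
            simp
          set bridge := K'.toList.map
            (fun C => if (x, !ε) ∈ C then C else Clause.drop x C) with hbr
          set B := (A ++ K'.toList) ++ bridge with hB
          have hGB : GoodI K' B := by
            refine goodI_append_indep (goodI_append hGA
              (goodI_axioms hP (fun C hC => Finset.mem_toList.1 hC))) ?_
            intro D hD
            rcases List.mem_map.1 hD with ⟨C, hC, rfl⟩
            have hCK : C ∈ K' := Finset.mem_toList.1 hC
            by_cases h1 : (x, !ε) ∈ C
            · rw [if_pos h1]
              exact ⟨hP C hCK, Or.inl hCK⟩
            · rw [if_neg h1]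
              refine ⟨proper_of_subset (Clause.drop_subset x C) (hP C hCK), ?_⟩
              by_cases h2 : (x, ε) ∈ C
              · -- resolve C with the unit clause u on x
                have hCmem : C ∈ A ++ K'.toList := List.mem_append_right _ hC
                have humem : u ∈ A ++ K'.toList := List.mem_append_left _ huA
                have hd : Clause.drop x C = C.erase (x, ε) := drop_eq_erase h1
                rcases Bool.eq_false_or_eq_true ε with hε | hε
                · subst hε
                  -- ε = true : C has (x,true), u = {(x,false)}
                  refine Or.inr (Or.inr ⟨C, hCmem, u, humem, x, h2, by simp [hu], ?_, ?_, ?_⟩)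
                  · rw [hd]
                    simp [hu, Finset.erase_singleton]
                  · simp [Clause.drop]
                  · simp [Clause.drop]
                · subst hε
                  -- ε = false : C has (x,false), u = {(x,true)}
                  refine Or.inr (Or.inr ⟨u, humem, C, hCmem, x, by simp [hu], h2, ?_, ?_, ?_⟩)
                  · rw [hd]
                    simp [hu, Finset.erase_singleton]
                  · simp [Clause.drop]
                  · simp [Clause.drop]
              · have hself : Clause.drop x C = C := by
                  refine drop_eq_self ?_
                  intro b hbmem
                  cases b <;> cases ε <;>
                    first
                      | exact h1 hbmem
                      | exact h2 hbmem
                rw [hself]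
                exact Or.inl hCK
          have hcov : ∀ C' ∈ K₂, ∃ E ∈ B, E ⊆ C' := by
            intro C' hC'
            rcases mem_restrict.1 hC' with ⟨C, hC, hCx, rfl⟩
            refine ⟨Clause.drop x C, ?_, subset_rfl⟩
            rw [hB]
            refine List.mem_append_right _ ?_
            rw [hbr]
            refine List.mem_map.2 ⟨C, Finset.mem_toList.2 hC, ?_⟩
            rw [if_neg hCx]
          obtain ⟨hGM₂, M₂', hM₂'⟩ := isResRefutation_iff.1 hM₂
          have hfinal : IsResRefutation K' (B ++ M₂) := by
            rw [isResRefutation_iff]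
            refine ⟨goodI_replay hGB hcov hGM₂, B ++ M₂', by rw [hM₂', hB]; simp⟩
          refine ⟨B ++ M₂, hfinal, ?_⟩
          rw [listWidth_le_iff]
          intro C hC
          rcases List.mem_append.1 hC with hC | hC
          · rw [hB] at hC
            rcases List.mem_append.1 hC with hC | hC
            · rcases List.mem_append.1 hC with hC | hC
              · have := hAw C hC
                omega
              · have := hw C (Finset.mem_toList.1 hC)
                omega
            · rcases List.mem_map.1 hC with ⟨C₀, hC₀, rfl⟩
              have hC₀K := hw C₀ (Finset.mem_toList.1 hC₀)
              by_cases h1 : (x, !ε) ∈ C₀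
              · rw [if_pos h1]; omega
              · rw [if_neg h1]
                have := Finset.card_le_card (Clause.drop_subset x C₀)
                omega
          · have := le_trans (listWidth_mem_le hC) hM₂w
            omega

end Aux8
section Aux9

lemma self_proj_refutation {K : CNF} {L : List Clause} (hL : IsResRefutation K L) :
    IsResRefutation K (projList (CNF.vars K) L) := by
  rcases isResRefutation_iff.1 hL with ⟨hG, L', rfl⟩
  rw [isResRefutation_iff]
  refine ⟨proj_goodI ?_ hG, _, projList_concat_empty _ _⟩
  intro C hC l hl
  exact clauseVars_subset hC (Finset.mem_image_of_mem _ hl)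

lemma resWidth_le {K : CNF} {M : List Clause} (hM : IsResRefutation K M) :
    resWidth K ≤ listWidth M := Nat.sInf_le ⟨M, hM, rfl⟩

lemma listWidth_singleton_empty : listWidth [(∅ : Clause)] = 0 := by simp [listWidth]

lemma empty_mem_of_short_refutation {K : CNF} {L : List Clause}
    (hL : IsResRefutation K L) (h : L.length = 1) : (∅ : Clause) ∈ K := by
  obtain ⟨hne, hlast, hstep⟩ := hL
  rcases List.length_eq_one_iff.1 h with ⟨C, rfl⟩
  have hC : C = ∅ := by simpa using hlast
  subst hC
  have := (hstep ⟨0, by simp⟩).2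
  rcases this with h1 | ⟨E, hE, -⟩ | ⟨C₁, h₁, -⟩
  · simpa using h1
  · simp at hE
  · simp at h₁

lemma resSize_facts {K : CNF} (hEx : ∃ L, IsResRefutation K L) :
    ∃ L, IsResRefutation K L ∧ L.length = resSize K ∧ 1 ≤ resSize K := by
  obtain ⟨L₀, hL₀⟩ := hEx
  have hne : {s : ℕ | ∃ L : List Clause, IsResRefutation K L ∧ L.length = s}.Nonempty :=
    ⟨L₀.length, L₀, hL₀, rfl⟩
  obtain ⟨L, hL, hlen⟩ := Nat.sInf_mem hne
  refine ⟨L, hL, hlen, ?_⟩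
  have h1 : 1 ≤ L.length := List.length_pos_iff.2 hL.1
  have h2 : L.length = resSize K := hlen
  omega

end Aux9
set_option maxHeartbeats 1000000 in
/-- the Ben-Sasson–Wigderson size-width tradeoff. -/
theorem size_width_tradeoff :
    ∃ c : ℝ, 0 < c ∧
      ∀ (n r : ℕ) (K : CNF), CNF.Proper K → (CNF.vars K).card ≤ n → CNF.Unsat K →
        (∀ C ∈ K, C.card ≤ r) →
        Real.exp (c * ((resWidth K - r : ℕ) : ℝ) ^ 2 / n) ≤ (resSize K : ℝ) := by
  refine ⟨1/32, by norm_num, ?_⟩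
  intro n r K hP hv hU hw
  obtain ⟨L, hL, hLlen, hS1⟩ :=
    resSize_facts (exists_refutation (CNF.vars K).card K le_rfl hP hU)
  by_cases hwr : resWidth K ≤ r
  · have h0 : resWidth K - r = 0 := Nat.sub_eq_zero_of_le hwr
    rw [h0]
    have : (1/32 : ℝ) * ((0:ℕ):ℝ) ^ 2 / n = 0 := by norm_num
    rw [this, Real.exp_zero]
    exact_mod_cast hS1
  · push_neg at hwr
    have hn : 1 ≤ n := by
      by_contra h
      have hn0 : n = 0 := by omega
      subst hn0
      have hv0 : CNF.vars K = ∅ := Finset.card_eq_zero.1 (Nat.le_zero.1 hv)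
      have h₀ : (∅ : Clause) ∈ K := empty_mem_of_unsat_no_vars hU hv0
      have := resWidth_le (singleton_refutation h₀)
      rw [listWidth_singleton_empty] at this
      omega
    have hS2 : 2 ≤ resSize K := by
      by_contra h
      have h₀ : (∅ : Clause) ∈ K := empty_mem_of_short_refutation hL (by omega)
      have := resWidth_le (singleton_refutation h₀)
      rw [listWidth_singleton_empty] at this
      omega
    set S := resSize K with hSdef
    have hSR : (2 : ℝ) ≤ (S : ℝ) := by exact_mod_cast hS2
    have hlogS : 0 < Real.log S := Real.log_pos (by linarith)
    have hnR : (1 : ℝ) ≤ (n : ℝ) := by exact_mod_cast hn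
    set xR : ℝ := Real.sqrt (2 * n * Real.log S) with hxR
    have harg : (1 : ℝ) ≤ 2 * n * Real.log S := by
      have hl2 : Real.log 2 ≤ Real.log S := Real.log_le_log (by norm_num) hSR
      have hd9 : (0.6931471803 : ℝ) < Real.log 2 := Real.log_two_gt_d9
      nlinarith
    have hx1 : (1 : ℝ) ≤ xR := by
      rw [hxR, show (1:ℝ) = Real.sqrt 1 by simp]
      exact Real.sqrt_le_sqrt harg
    have hx0 : (0:ℝ) ≤ xR := by linarith
    set d := ⌈xR⌉₊ with hd
    have hdx : xR ≤ (d : ℝ) := Nat.le_ceil xR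
    have hdx2 : (d : ℝ) ≤ xR + 1 := le_of_lt (Nat.ceil_lt_add_one hx0)
    have hd1 : 1 ≤ d := by
      have : (0:ℝ) < xR := by linarith
      exact Nat.one_le_iff_ne_zero.2 (by
        intro h0
        rw [hd] at h0
        have := Nat.ceil_eq_zero.1 h0
        linarith)
    have hx2 : xR ^ 2 = 2 * n * Real.log S := Real.sq_sqrt (by linarith)
    have hnum : (2 * n - (d + 1)) ^ d * S < (2 * n) ^ d := by
      by_cases hdn : 2 * n ≤ d + 1
      · rw [Nat.sub_eq_zero_of_le hdn, zero_pow (by omega : d ≠ 0)]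
        simpa using pow_pos (by omega : 0 < 2 * n) d
      · push_neg at hdn
        have hdnR : ((d:ℝ) + 1) < 2 * n := by exact_mod_cast hdn
        have hβpos : (0:ℝ) < 2 * (n:ℝ) - ((d:ℝ) + 1) := by linarith
        have hN2pos : (0:ℝ) < 2 * (n:ℝ) := by linarith
        have hlog1 : Real.log ((2 * (n:ℝ) - ((d:ℝ) + 1)) / (2 * n)) ≤
            (2 * (n:ℝ) - ((d:ℝ) + 1)) / (2 * n) - 1 :=
          Real.log_le_sub_one_of_pos (div_pos hβpos hN2pos)
        have hlogdiv : Real.log (2 * (n:ℝ) / (2 * (n:ℝ) - ((d:ℝ) + 1))) =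
            - Real.log ((2 * (n:ℝ) - ((d:ℝ) + 1)) / (2 * n)) := by
          rw [← Real.log_inv]
          congr 1
          rw [inv_div]
        have hstep : ((d:ℝ) + 1) / (2 * n) ≤
            Real.log (2 * (n:ℝ) / (2 * (n:ℝ) - ((d:ℝ) + 1))) := by
          rw [hlogdiv]
          have he : (2 * (n:ℝ) - ((d:ℝ) + 1)) / (2 * n) = 1 - ((d:ℝ)+1)/(2*n) := by
            field_simp
          linarith [hlog1, he]
        have hprod : 2 * (n:ℝ) * Real.log S < d * ((d:ℝ) + 1) := by
          have hdd : (1:ℝ) ≤ (d:ℝ) := by exact_mod_cast hd1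
          nlinarith [hx2]
        have hmain : Real.log (S:ℝ) < (d:ℝ) * Real.log (2 * (n:ℝ) / (2 * (n:ℝ) - ((d:ℝ) + 1))) := by
          have h2 : (d:ℝ) * (((d:ℝ)+1)/(2*n)) ≤
              (d:ℝ) * Real.log (2*(n:ℝ)/(2 * (n:ℝ) - ((d:ℝ) + 1))) :=
            mul_le_mul_of_nonneg_left hstep (by positivity)
          have h3 : Real.log S < (d:ℝ) * (((d:ℝ)+1)/(2*n)) := by
            have he : (d:ℝ) * (((d:ℝ)+1)/(2*n)) = ((d:ℝ) * ((d:ℝ)+1))/(2*n) := by ring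
            rw [he, lt_div_iff₀ hN2pos]
            nlinarith [hprod]
          linarith
        have hSpos : (0:ℝ) < S := by linarith
        have hpow : (S : ℝ) < (2 * (n:ℝ) / (2 * (n:ℝ) - ((d:ℝ) + 1))) ^ d := by
          calc (S:ℝ) = Real.exp (Real.log S) := (Real.exp_log hSpos).symm
          _ < Real.exp ((d:ℝ) * Real.log (2*(n:ℝ)/(2 * (n:ℝ) - ((d:ℝ) + 1)))) :=
              Real.exp_lt_exp.2 hmain
          _ = (2*(n:ℝ)/(2 * (n:ℝ) - ((d:ℝ) + 1)))^d := by
              rw [Real.exp_nat_mul, Real.exp_log (div_pos hN2pos hβpos)]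
        rw [← Nat.cast_lt (α := ℝ)]
        push_cast [Nat.cast_sub (le_of_lt hdn)]
        calc (2*(n:ℝ) - ((d:ℝ)+1))^d * S
            < (2*(n:ℝ) - ((d:ℝ)+1))^d * (2*(n:ℝ)/(2 * (n:ℝ) - ((d:ℝ) + 1)))^d :=
              mul_lt_mul_of_pos_left hpow (pow_pos hβpos d)
        _ = (2*(n:ℝ))^d := by
              rw [← mul_pow, mul_div_cancel₀ _ (ne_of_gt hβpos)]
    have hpack : ∃ L', IsResRefutation K L' ∧ (∀ C ∈ L', ∀ l ∈ C, l.1 ∈ CNF.vars K) ∧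
        fatCount d L' ≤ S := by
      refine ⟨projList (CNF.vars K) L, self_proj_refutation hL, projList_clean, ?_⟩
      have h1 := fatCount_le_length d (projList (CNF.vars K) L)
      have h2 : (projList (CNF.vars K) L).length = L.length := List.length_map _
      omega
    obtain ⟨M, hM, hMw⟩ := main_width n r d hn d K S hP hv hw hpack hnum
    have hwle : resWidth K ≤ r + d + d := le_trans (resWidth_le hM) hMw
    have hsub : ((resWidth K - r : ℕ) : ℝ) ≤ 2 * d := by
      have : resWidth K - r ≤ 2 * d := by omega
      exact_mod_cast this
    have ha0 : (0:ℝ) ≤ ((resWidth K - r : ℕ) : ℝ) := Nat.cast_nonneg _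
    have hd4 : (2:ℝ) * d ≤ 4 * xR := by nlinarith
    have ha2 : ((resWidth K - r : ℕ) : ℝ)^2 ≤ 32 * n * Real.log S := by nlinarith [hx2]
    have hexp : (1/32 : ℝ) * ((resWidth K - r : ℕ) : ℝ)^2 / n ≤ Real.log S := by
      rw [div_le_iff₀ (by linarith : (0:ℝ) < (n:ℝ))]
      nlinarith
    calc Real.exp (1/32 * ((resWidth K - r : ℕ) : ℝ)^2 / n) ≤ Real.exp (Real.log S) :=
        Real.exp_le_exp.2 hexp
    _ = S := Real.exp_log (by linarith)
end

section
/- For every positive integer c there exists a polynomial p such that for all n the following holds: if K is an unsatisfiable 3CNF formula over n variables and there is a set S of at most 3(c−1) variables such that every clause of K contains some variable from S, then K has a resolution refutation of size at most p(n). -/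
open scoped Classical

namespace Aux

/-- Decomposition form of a valid derivation. -/
def DerivD (K : CNF) (L : List Clause) : Prop :=
  ∀ l₁ D l₂, L = l₁ ++ D :: l₂ → Clause.Proper D ∧ ResStep K l₁ D

lemma resStep_mono {K : CNF} {p q : List Clause} (h : ∀ x ∈ p, x ∈ q) {D : Clause}
    (hs : ResStep K p D) : ResStep K q D := by
  rcases hs with h1 | ⟨E, hE, hsub⟩ | ⟨C₁, h₁, C₂, h₂, x, hx⟩
  · exact Or.inl h1
  · exact Or.inr (Or.inl ⟨E, h _ hE, hsub⟩)
  · exact Or.inr (Or.inr ⟨C₁, h _ h₁, C₂, h _ h₂, x, hx⟩)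

lemma derivD_append {K : CNF} {A B : List Clause} (hA : DerivD K A)
    (hB : ∀ l₁ D l₂, B = l₁ ++ D :: l₂ → Clause.Proper D ∧ ResStep K (A ++ l₁) D) :
    DerivD K (A ++ B) := by
  intro l₁ D l₂ hEq
  rcases List.append_eq_append_iff.mp hEq with ⟨a', rfl, h2⟩ | ⟨c', hA', h2⟩
  · exact hB a' D l₂ h2
  · cases c' with
    | nil =>
      simp at hA'
      subst hA'
      have := hB [] D l₂ (by simpa using h2.symm)
      simpa using this
    | cons E c'' =>
      obtain ⟨rfl, rfl⟩ : E = D ∧ l₂ = c'' ++ B := by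
        have := h2
        simp only [List.cons_append] at this
        exact ⟨(List.cons_eq_cons.mp this).1.symm, (List.cons_eq_cons.mp this).2⟩
      exact hA _ _ _ hA'

lemma derivD_mem_proper {K : CNF} {L : List Clause} (h : DerivD K L) {C : Clause}
    (hC : C ∈ L) : Clause.Proper C := by
  obtain ⟨s, t, rfl⟩ := List.append_of_mem hC
  exact (h s C t rfl).1

lemma derivD_axioms {K : CNF} {B : List Clause} (hP : ∀ C ∈ B, Clause.Proper C)
    (hm : ∀ C ∈ B, C ∈ K) : DerivD K B := fun l₁ D l₂ h =>
  ⟨hP D (by simp [h]), Or.inl (hm D (by simp [h]))⟩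

lemma single_decomp {l₁ l₂ : List Clause} {D x : Clause} (h : [x] = l₁ ++ D :: l₂) :
    l₁ = [] ∧ D = x ∧ l₂ = [] := by
  cases l₁ with
  | nil => simpa using h.symm
  | cons a t => simp at h

lemma derivD_to_fin {K : CNF} {L : List Clause} (h : DerivD K L) :
    ∀ i : Fin L.length, Clause.Proper (L.get i) ∧ ResStep K (L.take i.val) (L.get i) := by
  intro i
  have hd : L = L.take i.val ++ L.get i :: L.drop (i.val + 1) := by
    rw [List.get_eq_getElem]
    conv_lhs => rw [← List.take_append_drop i.val L]
    rw [List.drop_eq_getElem_cons i.isLt]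
  exact h _ _ _ hd

end Aux
namespace Aux

lemma mem_vars {C : Clause} {u : Var} : u ∈ Clause.vars C ↔ ∃ bb, (u, bb) ∈ C := by
  constructor
  · rintro h
    obtain ⟨l, hl, he⟩ := Finset.mem_image.mp h
    exact ⟨l.2, by rwa [show (u, l.2) = l from Prod.ext he.symm rfl]⟩
  · rintro ⟨bb, h⟩
    exact Finset.mem_image.mpr ⟨(u, bb), h, rfl⟩

lemma proper_subset {C D : Clause} (h : C ⊆ D) (hD : Clause.Proper D) : Clause.Proper C :=
  fun v hv => hD v ⟨h hv.1, h hv.2⟩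

lemma proper_empty : Clause.Proper (∅ : Clause) := fun v hv => by simp at hv

lemma vars_mono {C D : Clause} (h : C ⊆ D) : Clause.vars C ⊆ Clause.vars D :=
  Finset.image_subset_image h

lemma vars_union (C D : Clause) : Clause.vars (C ∪ D) = Clause.vars C ∪ Clause.vars D :=
  Finset.image_union _ _

lemma vars_insert (l : Lit) (C : Clause) :
    Clause.vars (insert l C) = insert l.1 (Clause.vars C) := Finset.image_insert _ _ _

lemma clause_vars_subset {C : Clause} {K : CNF} (h : C ∈ K) : Clause.vars C ⊆ CNF.vars K :=
  Finset.le_sup (f := Clause.vars) h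

lemma mem_cnf_vars {K : CNF} {u : Var} : u ∈ CNF.vars K ↔ ∃ C ∈ K, u ∈ Clause.vars C :=
  Finset.mem_sup

lemma vars_empty_eq (C : Clause) (h : Clause.vars C = ∅) : C = ∅ :=
  Finset.image_eq_empty.mp h

lemma eval_update_ne (a : Assignment) (v : Var) (b : Bool) (l : Lit) (h : l.1 ≠ v) :
    Lit.eval (Function.update a v b) l = Lit.eval a l := by
  simp [Lit.eval, Function.update_of_ne h]

lemma eval_update_self (a : Assignment) (v : Var) (b : Bool) :
    Lit.eval (Function.update a v b) (v, b) = true := by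
  cases b <;> simp [Lit.eval, Function.update_self]

lemma proper_insert {C : Clause} {v : Var} {b : Bool} (hC : Clause.Proper C)
    (hv : v ∉ Clause.vars C) : Clause.Proper (insert (v, b) C) := by
  intro u hu
  obtain ⟨h1, h2⟩ := hu
  rcases Finset.mem_insert.mp h1 with he1 | hc1
  · obtain ⟨rfl, rfl⟩ : u = v ∧ true = b := Prod.mk.inj he1
    rcases Finset.mem_insert.mp h2 with he2 | hc2
    · simp at he2
    · exact hv (mem_vars.mpr ⟨false, hc2⟩)
  · rcases Finset.mem_insert.mp h2 with he2 | hc2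
    · obtain ⟨rfl, rfl⟩ : u = v ∧ false = b := by exact Prod.mk.inj he2
      exact hv (mem_vars.mpr ⟨true, hc1⟩)
    · exact hC u ⟨hc1, hc2⟩

/-- counting: a CNF all of whose clauses have ≤ k literals over ≤ n variables is small -/
lemma cnf_card_le (K : CNF) (k n : ℕ) (hk : ∀ C ∈ K, C.card ≤ k)
    (hn : (CNF.vars K).card ≤ n) :
    K.card ≤ ∑ j ∈ Finset.range (k + 1), (2 * n) ^ j := by
  classical
  set s : Finset Lit := (CNF.vars K) ×ˢ (Finset.univ : Finset Bool) with hs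
  have hsub : K ⊆ (Finset.range (k + 1)).biUnion (fun j => s.powersetCard j) := by
    intro C hC
    refine Finset.mem_biUnion.mpr ⟨C.card, Finset.mem_range.mpr (Nat.lt_succ_of_le (hk C hC)), ?_⟩
    refine Finset.mem_powersetCard.mpr ⟨?_, rfl⟩
    intro l hl
    exact Finset.mem_product.mpr ⟨clause_vars_subset hC (mem_vars.mpr ⟨l.2, by simpa using hl⟩),
      Finset.mem_univ _⟩
  calc K.card ≤ _ := Finset.card_le_card hsub
    _ ≤ ∑ j ∈ Finset.range (k + 1), (s.powersetCard j).card := Finset.card_biUnion_le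
    _ ≤ ∑ j ∈ Finset.range (k + 1), (2 * n) ^ j := by
        refine Finset.sum_le_sum fun j _ => ?_
        rw [Finset.card_powersetCard]
        have hcard : s.card ≤ 2 * n := by
          rw [hs, Finset.card_product]
          simp only [Finset.card_univ, Fintype.card_bool]
          omega
        exact (Nat.choose_le_choose j hcard).trans (Nat.choose_le_pow (2 * n) j)

end Aux
namespace Aux

/-- Restriction of a CNF by setting variable `v` to `b`. -/
noncomputable def res (v : Var) (b : Bool) (K : CNF) : CNF :=
  (K.filter (fun C => (v, b) ∉ C)).image (fun C => C.erase (v, !b))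

lemma mem_res {v : Var} {b : Bool} {K : CNF} {C' : Clause} :
    C' ∈ res v b K ↔ ∃ C, C ∈ K ∧ (v, b) ∉ C ∧ C' = C.erase (v, !b) := by
  simp only [res, Finset.mem_image, Finset.mem_filter]
  constructor
  · rintro ⟨C, ⟨h1, h2⟩, rfl⟩; exact ⟨C, h1, h2, rfl⟩
  · rintro ⟨C, h1, h2, rfl⟩; exact ⟨C, ⟨h1, h2⟩, rfl⟩

lemma proper_res {v b} {K : CNF} (hP : CNF.Proper K) : CNF.Proper (res v b K) := by
  rintro C' hC'
  obtain ⟨C, hC, -, rfl⟩ := mem_res.mp hC'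
  exact proper_subset (Finset.erase_subset _ _) (hP C hC)

lemma vars_res_subset (v : Var) (b : Bool) (K : CNF) : CNF.vars (res v b K) ⊆ CNF.vars K := by
  intro u hu
  obtain ⟨C', hC', hu'⟩ := mem_cnf_vars.mp hu
  obtain ⟨C, hC, -, rfl⟩ := mem_res.mp hC'
  exact clause_vars_subset hC (vars_mono (Finset.erase_subset _ _) hu')

lemma not_mem_vars_res (v : Var) (b : Bool) (K : CNF) : v ∉ CNF.vars (res v b K) := by
  intro hv
  obtain ⟨C', hC', hv'⟩ := mem_cnf_vars.mp hv
  obtain ⟨C, hC, hb, rfl⟩ := mem_res.mp hC'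
  obtain ⟨bb, hbb⟩ := mem_vars.mp hv'
  have h1 : (v, bb) ≠ (v, !b) := Finset.ne_of_mem_erase hbb
  have h2 : (v, bb) ∈ C := Finset.mem_of_mem_erase hbb
  have hbbb : bb = b := by cases bb <;> cases b <;> simp_all
  exact hb (hbbb ▸ h2)

lemma unsat_res {v b} {K : CNF} (hU : CNF.Unsat K) : CNF.Unsat (res v b K) := by
  rintro ⟨a, ha⟩
  apply hU
  refine ⟨Function.update a v b, fun C hC => ?_⟩
  by_cases h : (v, b) ∈ C
  · exact ⟨(v, b), h, eval_update_self a v b⟩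
  · obtain ⟨l, hl, he⟩ := ha _ (mem_res.mpr ⟨C, hC, h, rfl⟩)
    have hlv : l.1 ≠ v := by
      intro hv
      have h1 : l ≠ (v, !b) := Finset.ne_of_mem_erase hl
      have h2 : l ∈ C := Finset.mem_of_mem_erase hl
      have : l = (v, b) := by
        obtain ⟨x, y⟩ := l
        simp only at hv
        subst hv
        cases y <;> cases b <;> simp_all
      exact h (this ▸ h2)
    exact ⟨l, Finset.mem_of_mem_erase hl, by rw [eval_update_ne a v b l hlv]; exact he⟩

/-- The resolvent of two clauses on variable `v`. -/
def resolvent (v : Var) (C₁ C₂ : Clause) : Clause := C₁.erase (v, true) ∪ C₂.erase (v, false)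

/-- Davis–Putnam elimination of variable `v`. -/
noncomputable def elim (v : Var) (K : CNF) : CNF :=
  K.filter (fun C => v ∉ Clause.vars C) ∪
    ((K ×ˢ K).filter
        (fun p => (v, true) ∈ p.1 ∧ (v, false) ∈ p.2 ∧ Clause.Proper (resolvent v p.1 p.2))).image
      (fun p => resolvent v p.1 p.2)

lemma mem_elim {v : Var} {K : CNF} {C : Clause} :
    C ∈ elim v K ↔ (C ∈ K ∧ v ∉ Clause.vars C) ∨
      ∃ C₁ C₂, C₁ ∈ K ∧ C₂ ∈ K ∧ (v, true) ∈ C₁ ∧ (v, false) ∈ C₂ ∧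
        Clause.Proper (resolvent v C₁ C₂) ∧ C = resolvent v C₁ C₂ := by
  simp only [elim, Finset.mem_union, Finset.mem_filter, Finset.mem_image, Finset.mem_product]
  constructor
  · rintro (⟨h1, h2⟩ | ⟨⟨C₁, C₂⟩, ⟨⟨hK1, hK2⟩, ht, hf, hp⟩, rfl⟩)
    · exact Or.inl ⟨h1, h2⟩
    · exact Or.inr ⟨C₁, C₂, hK1, hK2, ht, hf, hp, rfl⟩
  · rintro (⟨h1, h2⟩ | ⟨C₁, C₂, hK1, hK2, ht, hf, hp, rfl⟩)
    · exact Or.inl ⟨h1, h2⟩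
    · exact Or.inr ⟨⟨C₁, C₂⟩, ⟨⟨hK1, hK2⟩, ht, hf, hp⟩, rfl⟩

lemma proper_elim {v} {K : CNF} (hP : CNF.Proper K) : CNF.Proper (elim v K) := by
  rintro C hC
  rcases mem_elim.mp hC with ⟨h1, -⟩ | ⟨C₁, C₂, -, -, -, -, hp, rfl⟩
  · exact hP C h1
  · exact hp

lemma not_true_mem_resolvent {v : Var} {C₁ C₂ : Clause} (h2 : Clause.Proper C₂)
    (hf : (v, false) ∈ C₂) : (v, true) ∉ resolvent v C₁ C₂ := by
  intro h
  rcases Finset.mem_union.mp h with h | h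
  · exact (Finset.ne_of_mem_erase h) rfl
  · exact h2 v ⟨Finset.mem_of_mem_erase h, hf⟩

lemma not_false_mem_resolvent {v : Var} {C₁ C₂ : Clause} (h1 : Clause.Proper C₁)
    (ht : (v, true) ∈ C₁) : (v, false) ∉ resolvent v C₁ C₂ := by
  intro h
  rcases Finset.mem_union.mp h with h | h
  · exact h1 v ⟨ht, Finset.mem_of_mem_erase h⟩
  · exact (Finset.ne_of_mem_erase h) rfl

lemma vars_elim_subset (v : Var) (K : CNF) : CNF.vars (elim v K) ⊆ CNF.vars K := by
  intro u hu
  obtain ⟨C, hC, hu'⟩ := mem_cnf_vars.mp hu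
  rcases mem_elim.mp hC with ⟨h1, -⟩ | ⟨C₁, C₂, hK1, hK2, -, -, -, rfl⟩
  · exact clause_vars_subset h1 hu'
  · rw [resolvent, vars_union] at hu'
    rcases Finset.mem_union.mp hu' with h | h
    · exact clause_vars_subset hK1 (vars_mono (Finset.erase_subset _ _) h)
    · exact clause_vars_subset hK2 (vars_mono (Finset.erase_subset _ _) h)

lemma not_mem_vars_elim {v : Var} {K : CNF} (hP : CNF.Proper K) : v ∉ CNF.vars (elim v K) := by
  intro hv
  obtain ⟨C, hC, hv'⟩ := mem_cnf_vars.mp hv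
  rcases mem_elim.mp hC with ⟨h1, h2⟩ | ⟨C₁, C₂, hK1, hK2, ht, hf, -, rfl⟩
  · exact h2 hv'
  · obtain ⟨bb, hbb⟩ := mem_vars.mp hv'
    cases bb
    · exact not_false_mem_resolvent (hP C₁ hK1) ht hbb
    · exact not_true_mem_resolvent (hP C₂ hK2) hf hbb

lemma card_le_elim {v : Var} {K : CNF} (h2 : ∀ C ∈ K, C.card ≤ 2) :
    ∀ C ∈ elim v K, C.card ≤ 2 := by
  intro C hC
  rcases mem_elim.mp hC with ⟨h1, -⟩ | ⟨C₁, C₂, hK1, hK2, ht, hf, -, rfl⟩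
  · exact h2 C h1
  · calc (resolvent v C₁ C₂).card ≤ (C₁.erase (v, true)).card + (C₂.erase (v, false)).card :=
        Finset.card_union_le _ _
      _ ≤ 2 := by
        rw [Finset.card_erase_of_mem ht, Finset.card_erase_of_mem hf]
        have := h2 C₁ hK1; have := h2 C₂ hK2
        omega

lemma unsat_elim (v : Var) {K : CNF} (hP : CNF.Proper K) (hU : CNF.Unsat K) :
    CNF.Unsat (elim v K) := by
  rintro ⟨a, ha⟩
  -- find a clause of K falsified by update a v true containing (v, false)
  have key : ∀ b : Bool, ∃ C ∈ K, (v, !b) ∈ C ∧ ¬Clause.Sat (Function.update a v b) C := by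
    intro b
    have h1 : ¬ CNF.Sat (Function.update a v b) K := fun hs => hU ⟨_, hs⟩
    simp only [CNF.Sat, not_forall] at h1
    obtain ⟨C, hCK, hCn⟩ := h1
    refine ⟨C, hCK, ?_, hCn⟩
    have hvb : (v, b) ∉ C := by
      intro h
      exact hCn ⟨(v, b), h, eval_update_self a v b⟩
    by_contra hvnb
    have hvnotin : v ∉ Clause.vars C := by
      intro h
      obtain ⟨bb, hbb⟩ := mem_vars.mp h
      rcases Bool.eq_or_eq_not bb b with rfl | rfl
      · exact hvb hbb
      · exact hvnb hbb
    obtain ⟨l, hl, he⟩ := ha C (mem_elim.mpr (Or.inl ⟨hCK, hvnotin⟩))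
    have hlv : l.1 ≠ v := fun h => hvnotin (mem_vars.mpr ⟨l.2, by rwa [← h, Prod.mk.eta]⟩)
    exact hCn ⟨l, hl, by rw [eval_update_ne a v b l hlv]; exact he⟩
  obtain ⟨C₁, hK1, hf1, hn1⟩ := key true    -- (v, false) ∈ C₁, falsified by a[v:=true]
  obtain ⟨C₂, hK2, ht2, hn2⟩ := key false   -- (v, true) ∈ C₂, falsified by a[v:=false]
  simp only [Bool.not_true, Bool.not_false] at hf1 ht2
  set R := resolvent v C₂ C₁ with hR
  have hsatR : ∃ l ∈ R, Lit.eval a l = true := by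
    by_cases hp : Clause.Proper R
    · exact ha R (mem_elim.mpr (Or.inr ⟨C₂, C₁, hK2, hK1, ht2, hf1, hp, rfl⟩))
    · simp only [Clause.Proper, not_forall, not_not] at hp
      obtain ⟨u, hu1, hu2⟩ := hp
      refine ⟨(u, a u), ?_, by cases h : a u <;> simp [Lit.eval, h]⟩
      cases h : a u
      · exact h ▸ hu2
      · exact h ▸ hu1
  obtain ⟨l, hl, he⟩ := hsatR
  rcases Finset.mem_union.mp hl with h | h
  · -- l ∈ C₂.erase (v, true)
    have hlv : l.1 ≠ v := by
      intro hv
      have hne : l ≠ (v, true) := Finset.ne_of_mem_erase h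
      have : l = (v, false) := by obtain ⟨x, y⟩ := l; simp only at hv; subst hv; cases y <;> simp_all
      exact hP C₂ hK2 v ⟨ht2, this ▸ Finset.mem_of_mem_erase h⟩
    exact hn2 ⟨l, Finset.mem_of_mem_erase h, by rw [eval_update_ne a v false l hlv]; exact he⟩
  · have hlv : l.1 ≠ v := by
      intro hv
      have hne : l ≠ (v, false) := Finset.ne_of_mem_erase h
      have : l = (v, true) := by obtain ⟨x, y⟩ := l; simp only at hv; subst hv; cases y <;> simp_all
      exact hP C₁ hK1 v ⟨this ▸ Finset.mem_of_mem_erase h, hf1⟩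
    exact hn1 ⟨l, Finset.mem_of_mem_erase h, by rw [eval_update_ne a v true l hlv]; exact he⟩

end Aux
namespace Aux

lemma emptyclause_mem {K : CNF} (hv : CNF.vars K = ∅) (hU : CNF.Unsat K) : (∅ : Clause) ∈ K := by
  have hne : K.Nonempty := by
    rcases Finset.eq_empty_or_nonempty K with rfl | h
    · exact absurd ⟨fun _ => true, fun C hC => absurd hC (Finset.notMem_empty C)⟩ hU
    · exact h
  obtain ⟨C, hC⟩ := hne
  have : Clause.vars C = ∅ := Finset.subset_empty.mp (hv ▸ clause_vars_subset hC)
  exact (vars_empty_eq C this) ▸ hC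

lemma derivD_single_empty {K : CNF} (h : (∅ : Clause) ∈ K) : DerivD K [∅] := by
  intro l₁ D l₂ hEq
  obtain ⟨rfl, rfl, rfl⟩ := single_decomp hEq
  exact ⟨proper_empty, Or.inl h⟩

lemma elim_step_transfer {v : Var} {K : CNF} (hP : CNF.Proper K) {l₁ : List Clause} {D : Clause}
    (h : ResStep (elim v K) l₁ D) (prev : List Clause) (hK : ∀ C ∈ K, C ∈ prev)
    (hl : ∀ C ∈ l₁, C ∈ prev) : ResStep K prev D := by
  rcases h with h1 | h2 | h3
  · rcases mem_elim.mp h1 with ⟨hK1, -⟩ | ⟨C₁, C₂, hK1, hK2, ht, hf, -, rfl⟩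
    · exact Or.inl hK1
    · refine Or.inr (Or.inr ⟨C₁, hK C₁ hK1, C₂, hK C₂ hK2, v, ht, hf, rfl, ?_, ?_⟩)
      · exact not_true_mem_resolvent (hP C₂ hK2) hf
      · exact not_false_mem_resolvent (hP C₁ hK1) ht
  · obtain ⟨E, hE, hsub⟩ := h2
    exact Or.inr (Or.inl ⟨E, hl E hE, hsub⟩)
  · obtain ⟨C₁, h₁, C₂, h₂, x, hx⟩ := h3
    exact Or.inr (Or.inr ⟨C₁, hl _ h₁, C₂, hl _ h₂, x, hx⟩)

/-- The base case: unsatisfiable CNFs of width ≤ 2 have small refutations. -/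
lemma twoCNF (n : ℕ) : ∀ (m : ℕ) (K : CNF), CNF.Proper K → (∀ C ∈ K, C.card ≤ 2) →
    (CNF.vars K).card ≤ m → (CNF.vars K).card ≤ n → CNF.Unsat K →
    ∃ M : List Clause, DerivD K (M ++ [(∅ : Clause)]) ∧
      (∀ C ∈ M ++ [(∅ : Clause)], Clause.vars C ⊆ CNF.vars K) ∧
      (M ++ [(∅ : Clause)]).length ≤ (m + 1) * (4 * n ^ 2 + 2 * n + 1) + 1 := by
  intro m
  induction m with
  | zero =>
    intro K hP h2 hm hn hU
    have hv : CNF.vars K = ∅ := Finset.card_eq_zero.mp (Nat.le_zero.mp hm)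
    refine ⟨[], derivD_single_empty (emptyclause_mem hv hU), ?_, by simp⟩
    intro C hC
    simp only [List.nil_append, List.mem_singleton] at hC
    subst hC
    simp [Clause.vars]
  | succ m ih =>
    intro K hP h2 hm hn hU
    by_cases hv : CNF.vars K = ∅
    · refine ⟨[], derivD_single_empty (emptyclause_mem hv hU), ?_, by simp⟩
      intro C hC
      simp only [List.nil_append, List.mem_singleton] at hC
      subst hC
      simp [Clause.vars]
    · obtain ⟨v, hvK⟩ := Finset.nonempty_iff_ne_empty.mpr hv
      set K' := elim v K with hK'
      have hsub : CNF.vars K' ⊆ (CNF.vars K).erase v :=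
        Finset.subset_erase.mpr ⟨vars_elim_subset v K, not_mem_vars_elim hP⟩
      have hm' : (CNF.vars K').card ≤ m := by
        have := Finset.card_le_card hsub
        rw [Finset.card_erase_of_mem hvK] at this
        omega
      obtain ⟨M', hD', hV', hL'⟩ := ih K' (proper_elim hP) (card_le_elim h2)
        hm' (le_trans (Finset.card_le_card (vars_elim_subset v K)) hn) (unsat_elim v hP hU)
      refine ⟨K.toList ++ M', ?_, ?_, ?_⟩
      · rw [List.append_assoc]
        refine derivD_append (derivD_axioms (fun C hC => hP C (Finset.mem_toList.mp hC))
          (fun C hC => Finset.mem_toList.mp hC)) ?_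
        intro l₁ D l₂ hEq
        obtain ⟨hprop, hstep⟩ := hD' l₁ D l₂ hEq
        exact ⟨hprop, elim_step_transfer hP hstep _
          (fun C hC => List.mem_append_left _ (Finset.mem_toList.mpr hC))
          (fun C hC => List.mem_append_right _ hC)⟩
      · intro C hC
        rw [List.append_assoc] at hC
        rcases List.mem_append.mp hC with h | h
        · exact clause_vars_subset (Finset.mem_toList.mp h)
        · exact (hV' C h).trans (vars_elim_subset v K)
      · have hKcard : K.card ≤ 4 * n ^ 2 + 2 * n + 1 := by
          have := cnf_card_le K 2 n h2 hn
          simp [Finset.sum_range_succ, pow_succ] at this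
          nlinarith [this]
        have heq : ((K.toList ++ M') ++ [(∅:Clause)]).length
            = K.card + (M' ++ [(∅:Clause)]).length := by
          simp [List.length_append]
        rw [heq]
        calc K.card + (M' ++ [(∅:Clause)]).length
            ≤ (4 * n ^ 2 + 2 * n + 1) + ((m + 1) * (4 * n ^ 2 + 2 * n + 1) + 1) :=
              Nat.add_le_add hKcard hL'
          _ = (m + 1 + 1) * (4 * n ^ 2 + 2 * n + 1) + 1 := by ring

end Aux
namespace Aux

lemma lift_step {v : Var} {b : Bool} {K : CNF} (hK : CNF.Proper K)
    {prev m₁ : List Clause} {D : Clause}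
    (hKp : ∀ C ∈ K, C ∈ prev)
    (hm : ∀ C ∈ m₁, insert (v, !b) C ∈ prev)
    (hvm : ∀ C ∈ m₁, v ∉ Clause.vars C)
    (hstep : ResStep (res v b K) m₁ D) :
    ResStep K prev (insert (v, !b) D) := by
  rcases hstep with h1 | h2 | h3
  · obtain ⟨C, hC, hvb, rfl⟩ := mem_res.mp h1
    refine Or.inr (Or.inl ⟨C, hKp C hC, ?_⟩)
    intro l hl
    by_cases h : l = (v, !b)
    · exact h ▸ Finset.mem_insert_self _ _
    · exact Finset.mem_insert_of_mem (Finset.mem_erase.mpr ⟨h, hl⟩)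
  · obtain ⟨E, hE, hsub⟩ := h2
    exact Or.inr (Or.inl ⟨insert (v, !b) E, hm E hE, Finset.insert_subset_insert _ hsub⟩)
  · obtain ⟨C₁, h₁, C₂, h₂, x, hxt, hxf, hDeq, hnt, hnf⟩ := h3
    have hxv : x ≠ v := by
      intro h
      exact hvm C₁ h₁ (mem_vars.mpr ⟨true, h ▸ hxt⟩)
    refine Or.inr (Or.inr ⟨insert (v, !b) C₁, hm C₁ h₁, insert (v, !b) C₂, hm C₂ h₂, x,
      Finset.mem_insert_of_mem hxt, Finset.mem_insert_of_mem hxf, ?_, ?_, ?_⟩)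
    · rw [Finset.erase_insert_of_ne (by simp [hxv.symm] : ((v : Var), !b) ≠ (x, true)),
        Finset.erase_insert_of_ne (by simp [hxv.symm] : ((v : Var), !b) ≠ (x, false)),
        Finset.insert_union, Finset.union_insert, Finset.insert_idem, hDeq]
    · intro h
      rcases Finset.mem_insert.mp h with h | h
      · exact hxv (by exact (Prod.mk.inj h).1)
      · exact hnt h
    · intro h
      rcases Finset.mem_insert.mp h with h | h
      · exact hxv (by exact (Prod.mk.inj h).1)
      · exact hnf h

/-- The key lemma: small refutations for unsatisfiable CNFs of width ≤ 3 where every wide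
clause is hit by a small set `S`. -/
lemma keylemma (n : ℕ) : ∀ (s : ℕ) (K : CNF) (S : Finset Var),
    CNF.Proper K → (∀ C ∈ K, C.card ≤ 3) →
    (∀ C ∈ K, C.card ≤ 2 ∨ ∃ u ∈ S, u ∈ Clause.vars C) →
    S.card ≤ s → (CNF.vars K).card ≤ n → CNF.Unsat K →
    ∃ M : List Clause, DerivD K (M ++ [(∅ : Clause)]) ∧
      (∀ C ∈ M ++ [(∅ : Clause)], Clause.vars C ⊆ CNF.vars K) ∧
      (M ++ [(∅ : Clause)]).length ≤ (2 ^ (s + 1) - 1) * 16 * (n + 1) ^ 3 := by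
  have hbase : ∀ (s : ℕ) (K : CNF), CNF.Proper K → (∀ C ∈ K, C.card ≤ 2) →
      (CNF.vars K).card ≤ n → CNF.Unsat K →
      ∃ M : List Clause, DerivD K (M ++ [(∅ : Clause)]) ∧
        (∀ C ∈ M ++ [(∅ : Clause)], Clause.vars C ⊆ CNF.vars K) ∧
        (M ++ [(∅ : Clause)]).length ≤ (2 ^ (s + 1) - 1) * 16 * (n + 1) ^ 3 := by
    intro s K hP h2 hn hU
    obtain ⟨M, hD, hV, hL⟩ := twoCNF n n K hP h2 hn hn hU
    refine ⟨M, hD, hV, hL.trans ?_⟩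
    have h1 : (n + 1) * (4 * n ^ 2 + 2 * n + 1) + 1 ≤ 16 * (n + 1) ^ 3 := by nlinarith
    have h2' : (1 : ℕ) ≤ 2 ^ (s + 1) - 1 := by
      have : (2 : ℕ) ≤ 2 ^ (s + 1) := by
        calc (2:ℕ) = 2 ^ 1 := rfl
        _ ≤ 2 ^ (s + 1) := Nat.pow_le_pow_right (by norm_num) (by omega)
      omega
    calc (n + 1) * (4 * n ^ 2 + 2 * n + 1) + 1 ≤ 16 * (n + 1) ^ 3 := h1
      _ = 1 * 16 * (n + 1) ^ 3 := by ring
      _ ≤ (2 ^ (s + 1) - 1) * 16 * (n + 1) ^ 3 :=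
          Nat.mul_le_mul_right _ (Nat.mul_le_mul_right _ h2')
  intro s
  induction s with
  | zero =>
    intro K S hP h3 hhit hS hn hU
    have hSe : S = ∅ := Finset.card_eq_zero.mp (Nat.le_zero.mp hS)
    subst hSe
    refine hbase 0 K hP (fun C hC => ?_) hn hU
    rcases hhit C hC with h | ⟨u, hu, -⟩
    · exact h
    · exact absurd hu (Finset.notMem_empty u)
  | succ s ih =>
    intro K S hP h3 hhit hS hn hU
    by_cases hex : ∃ v, v ∈ S ∧ v ∈ CNF.vars K
    · obtain ⟨v, hvS, hvK⟩ := hex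
      -- recursive hypotheses for both restrictions
      have hrec : ∀ b : Bool, ∃ M : List Clause,
          DerivD (res v b K) (M ++ [(∅ : Clause)]) ∧
          (∀ C ∈ M ++ [(∅ : Clause)], Clause.vars C ⊆ CNF.vars (res v b K)) ∧
          (M ++ [(∅ : Clause)]).length ≤ (2 ^ (s + 1) - 1) * 16 * (n + 1) ^ 3 := by
        intro b
        refine ih (res v b K) (S.erase v) (proper_res hP) ?_ ?_ ?_ ?_ (unsat_res hU)
        · intro C' hC'
          obtain ⟨C, hC, -, rfl⟩ := mem_res.mp hC'
          exact le_trans (Finset.card_le_card (Finset.erase_subset _ _)) (h3 C hC)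
        · intro C' hC'
          obtain ⟨C, hC, hvb, rfl⟩ := mem_res.mp hC'
          rcases hhit C hC with h | ⟨u, huS, huC⟩
          · exact Or.inl (le_trans (Finset.card_le_card (Finset.erase_subset _ _)) h)
          · by_cases huv : u = v
            · subst huv
              obtain ⟨bb, hbb⟩ := mem_vars.mp huC
              have hbnb : bb = !b := by
                rcases Bool.eq_or_eq_not bb b with rfl | rfl
                · exact absurd hbb hvb
                · rfl
              subst hbnb
              left
              rw [Finset.card_erase_of_mem hbb]
              have := h3 C hC
              omega
            · refine Or.inr ⟨u, Finset.mem_erase.mpr ⟨huv, huS⟩, ?_⟩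
              obtain ⟨bb, hbb⟩ := mem_vars.mp huC
              exact mem_vars.mpr ⟨bb, Finset.mem_erase.mpr ⟨by simp [huv], hbb⟩⟩
        · rw [Finset.card_erase_of_mem hvS] at *
          omega
        · exact le_trans (Finset.card_le_card (vars_res_subset v b K)) hn
      obtain ⟨Mt, hDt, hVt, hLt⟩ := hrec true
      obtain ⟨Mf, hDf, hVf, hLf⟩ := hrec false
      set LT : List Clause := (Mt ++ [(∅ : Clause)]).map (fun C => insert (v, false) C) with hLT
      set LF : List Clause := (Mf ++ [(∅ : Clause)]).map (fun C => insert (v, true) C) with hLF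
      -- generic lift of a whole derivation segment
      have hliftseg : ∀ (b : Bool) (Mb : List Clause),
          DerivD (res v b K) (Mb ++ [(∅ : Clause)]) →
          (∀ C ∈ Mb ++ [(∅ : Clause)], Clause.vars C ⊆ CNF.vars (res v b K)) →
          ∀ (A : List Clause), (∀ C ∈ K, C ∈ A) →
          ∀ l₁ D l₂, ((Mb ++ [(∅ : Clause)]).map (fun C => insert (v, !b) C)) = l₁ ++ D :: l₂ →
            Clause.Proper D ∧ ResStep K (A ++ l₁) D := by
        intro b Mb hDb hVb A hKA l₁ D l₂ hEq
        obtain ⟨m₁, rest, hMb, hm1, hrest⟩ := List.map_eq_append_iff.mp hEq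
        obtain ⟨D₀, m₂, hrest2, hD0, -⟩ := List.map_eq_cons_iff.mp hrest
        have hMbdec : Mb ++ [(∅ : Clause)] = m₁ ++ D₀ :: m₂ := by rw [hMb, hrest2]
        have hstep := hDb m₁ D₀ m₂ hMbdec
        have hvnot : ∀ C ∈ Mb ++ [(∅ : Clause)], v ∉ Clause.vars C := by
          intro C hC hv
          exact not_mem_vars_res v b K (hVb C hC hv)
        have hm1mem : ∀ C ∈ m₁, C ∈ Mb ++ [(∅ : Clause)] := by
          intro C hC; rw [hMbdec]; exact List.mem_append_left _ hC
        constructor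
        · subst hD0
          exact proper_insert hstep.1 (hvnot D₀ (by rw [hMbdec]; simp))
        · subst hD0 hm1
          refine lift_step hP (fun C hC => List.mem_append_left _ (hKA C hC)) ?_ ?_ hstep.2
          · intro C hC
            exact List.mem_append_right _ (List.mem_map_of_mem hC)
          · intro C hC
            exact hvnot C (hm1mem C hC)
      -- assemble the full derivation
      set A1 : List Clause := K.toList with hA1
      have hKA1 : ∀ C ∈ K, C ∈ A1 := fun C hC => Finset.mem_toList.mpr hC
      have hD1 : DerivD K A1 :=
        derivD_axioms (fun C hC => hP C (Finset.mem_toList.mp hC))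
          (fun C hC => Finset.mem_toList.mp hC)
      have hD2 : DerivD K (A1 ++ LT) :=
        derivD_append hD1 (hliftseg true Mt hDt hVt A1 hKA1)
      have hD3 : DerivD K ((A1 ++ LT) ++ LF) :=
        derivD_append hD2 (hliftseg false Mf hDf hVf (A1 ++ LT)
          (fun C hC => List.mem_append_left _ (hKA1 C hC)))
      have hmemT : (insert (v, false) (∅ : Clause)) ∈ LT :=
        List.mem_map_of_mem (by simp)
      have hmemF : (insert (v, true) (∅ : Clause)) ∈ LF :=
        List.mem_map_of_mem (by simp)
      have hD4 : DerivD K (((A1 ++ LT) ++ LF) ++ [(∅ : Clause)]) := by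
        refine derivD_append hD3 ?_
        intro l₁ D l₂ hEq
        obtain ⟨rfl, rfl, rfl⟩ := single_decomp hEq
        refine ⟨proper_empty, Or.inr (Or.inr ⟨insert (v, true) ∅, ?_, insert (v, false) ∅, ?_,
          v, Finset.mem_insert_self _ _, Finset.mem_insert_self _ _, ?_, by simp, by simp⟩)⟩
        · simp only [List.append_nil]
          exact List.mem_append_right _ hmemF
        · simp only [List.append_nil]
          exact List.mem_append_left _ (List.mem_append_right _ hmemT)
        · rw [Finset.erase_insert (by simp), Finset.erase_insert (by simp)]
          simp
      refine ⟨(A1 ++ LT) ++ LF, hD4, ?_, ?_⟩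
      · intro C hC
        rcases List.mem_append.mp hC with hC | hC
        · rcases List.mem_append.mp hC with hC | hC
          · rcases List.mem_append.mp hC with hC | hC
            · exact clause_vars_subset (Finset.mem_toList.mp hC)
            · obtain ⟨C₀, hC₀, rfl⟩ := List.mem_map.mp hC
              rw [vars_insert]
              exact Finset.insert_subset hvK ((hVt C₀ hC₀).trans (vars_res_subset v true K))
          · obtain ⟨C₀, hC₀, rfl⟩ := List.mem_map.mp hC
            rw [vars_insert]
            exact Finset.insert_subset hvK ((hVf C₀ hC₀).trans (vars_res_subset v false K))
        · simp only [List.mem_singleton] at hC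
          subst hC
          simp [Clause.vars]
      · have hKcard : K.card ≤ 8 * n ^ 3 + 4 * n ^ 2 + 2 * n + 1 := by
          have := cnf_card_le K 3 n h3 hn
          simp [Finset.sum_range_succ, pow_succ] at this
          nlinarith [this]
        have hlen : (((A1 ++ LT) ++ LF) ++ [(∅ : Clause)]).length
            = K.card + (Mt ++ [(∅ : Clause)]).length + (Mf ++ [(∅ : Clause)]).length + 1 := by
          simp only [hA1, hLT, hLF, List.length_append, List.length_map,
            Finset.length_toList, List.length_singleton]
        rw [hlen]
        have hE : (1 : ℕ) ≤ 2 ^ (s + 1) := Nat.one_le_two_pow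
        have hsplit : (2 ^ (s + 1 + 1) - 1) = 2 * (2 ^ (s + 1) - 1) + 1 := by
          rw [pow_succ]
          omega
        rw [hsplit]
        have hKb : K.card + 1 + 1 ≤ 16 * (n + 1) ^ 3 := by nlinarith
        calc K.card + (Mt ++ [(∅ : Clause)]).length + (Mf ++ [(∅ : Clause)]).length + 1
            ≤ K.card + ((2 ^ (s + 1) - 1) * 16 * (n + 1) ^ 3)
              + ((2 ^ (s + 1) - 1) * 16 * (n + 1) ^ 3) + 1 := by omega
          _ ≤ (2 * (2 ^ (s + 1) - 1) + 1) * 16 * (n + 1) ^ 3 := by nlinarith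
    · refine hbase (s + 1) K hP (fun C hC => ?_) hn hU
      rcases hhit C hC with h | ⟨u, huS, huC⟩
      · exact h
      · exact absurd ⟨u, huS, clause_vars_subset hC huC⟩ hex

end Aux
/-- an unsatisfiable 3CNF with a hitting set of constantly many variables
has polynomial-size resolution refutations. -/
theorem refutation_with_small_hitting_set (c : ℕ) (hc : 0 < c) :
    ∃ p : Polynomial ℕ,
      ∀ (n : ℕ) (K : CNF), Is3CNF K → (CNF.vars K).card ≤ n → CNF.Unsat K →
        (∃ S : Finset Var, S.card ≤ 3 * (c - 1) ∧ ∀ C ∈ K, ∃ v ∈ S, v ∈ Clause.vars C) →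
        ∃ L : List Clause, IsResRefutation K L ∧ L.length ≤ p.eval n := by
  refine ⟨Polynomial.C ((2 ^ (3 * (c - 1) + 1) - 1) * 16) * (Polynomial.X + 1) ^ 3, ?_⟩
  intro n K h3 hn hU hhit
  obtain ⟨S, hScard, hSh⟩ := hhit
  have hP : CNF.Proper K := by
    intro C hC u hu
    obtain ⟨hcard, hvars⟩ := h3 C hC
    have hinj : Set.InjOn Prod.fst (C : Set Lit) := by
      rw [← Finset.card_image_iff]
      show (C.image Prod.fst).card = C.card
      rw [show C.image Prod.fst = Clause.vars C from rfl, hvars, hcard]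
    have heq : ((u, true) : Lit) = (u, false) := hinj (by exact_mod_cast hu.1)
      (by exact_mod_cast hu.2) rfl
    simp at heq
  obtain ⟨M, hD, -, hL⟩ := Aux.keylemma n (3 * (c - 1)) K S hP
    (fun C hC => le_of_eq (h3 C hC).1) (fun C hC => Or.inr (hSh C hC)) hScard hn hU
  refine ⟨M ++ [∅], ⟨by simp, List.getLast?_concat, Aux.derivD_to_fin hD⟩, ?_⟩
  calc (M ++ [(∅ : Clause)]).length ≤ (2 ^ (3 * (c - 1) + 1) - 1) * 16 * (n + 1) ^ 3 := hL
    _ = _ := by simp [Polynomial.eval_mul, Polynomial.eval_pow]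
end

section
/- Let 0 < δ < 1 and 0 < ϵ < 1/2 be constants and let β = n^{1/2−ϵ}. There exists n₀ (depending only on δ and ϵ) such that for all n ≥ n₀: if K is a 3CNF formula over n variables that is partially matchable, then every sub-collection K' ⊆ K with |K'| ≤ 2n·(80β)^{−2/(1−ϵ)} has more than 2^{δn} satisfying assignments in {0,1}^n. -/
open scoped Classical

/-- Counting assignments fixed on a finite set of coordinates. -/
lemma fixed_ncard (n : ℕ) (S : Finset (Fin n)) (g : Fin n → Bool) :
    ({b : Fin n → Bool | ∀ i ∈ S, b i = g i}).ncard = 2 ^ (n - S.card) := by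
  classical
  have e : {b : Fin n → Bool | ∀ i ∈ S, b i = g i} ≃ ({i : Fin n // i ∉ S} → Bool) :=
    { toFun := fun b i => b.1 i.1
      invFun := fun h => ⟨fun i => if hi : i ∈ S then g i else h ⟨i, hi⟩, by
        intro i hi; simp [hi]⟩
      left_inv := by
        rintro ⟨b, hb⟩
        refine Subtype.ext (funext fun i => ?_)
        by_cases hi : i ∈ S
        · simp [hi, hb i hi]
        · simp [hi]
      right_inv := by
        intro h
        funext i
        simp [i.2] }
  rw [← Nat.card_coe_set_eq, Nat.card_congr e, Nat.card_eq_fintype_card,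
    Fintype.card_fun]
  simp only [Fintype.card_bool]
  congr 1
  rw [Fintype.card_subtype_compl, Fintype.card_fin]
  congr 1
  simp [Fintype.card_subtype]
/-- for large n, every small sub-collection of a partially matchable
3CNF over n variables has more than 2^{δn} satisfying assignments. -/
theorem partially_matchable_many_sat (δ ϵ : ℝ) (hδ0 : 0 < δ) (hδ1 : δ < 1)
    (hϵ0 : 0 < ϵ) (hϵ1 : ϵ < 1 / 2) :
    ∃ n₀ : ℕ, ∀ n ≥ n₀, ∀ K : CNF, Is3CNF K → CNF.vars K ⊆ Finset.range n →
      (∀ K' : CNF, K' ⊆ K →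
        (K'.card : ℝ) ≤
            2 * n * (80 * (n : ℝ) ^ ((1 : ℝ) / 2 - ϵ)) ^ (-(2 : ℝ) / (1 - ϵ)) →
        K'.card ≤ (CNF.vars K').card) →
      ∀ K' : CNF, K' ⊆ K →
        (K'.card : ℝ) ≤
            2 * n * (80 * (n : ℝ) ^ ((1 : ℝ) / 2 - ϵ)) ^ (-(2 : ℝ) / (1 - ϵ)) →
        (2 : ℝ) ^ (δ * n) < ((satSet n K').ncard : ℝ) := by
  classical
  set α : ℝ := ϵ / (1 - ϵ) with hα
  have hϵ1' : (0:ℝ) < 1 - ϵ := by linarith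
  have hα1 : α < 1 := by
    rw [hα, div_lt_one hϵ1']; linarith
  have hα0 : 0 < α := div_pos hϵ0 hϵ1'
  -- eventual inequality: (1-δ) * n^(1-α) ≥ 3
  have htend : Filter.Tendsto (fun n : ℕ => (1 - δ) * (n : ℝ) ^ (1 - α))
      Filter.atTop Filter.atTop := by
    refine Filter.Tendsto.const_mul_atTop (by linarith) ?_
    exact (tendsto_rpow_atTop (by linarith)).comp tendsto_natCast_atTop_atTop
  obtain ⟨n₀, hn₀⟩ := Filter.eventually_atTop.mp (htend.eventually_ge_atTop 3)
  refine ⟨max n₀ 1, fun n hn K h3 hvars hmatch K' hK' hcard => ?_⟩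
  have hn1 : 1 ≤ n := le_trans (le_max_right _ _) hn
  have hnR : (1:ℝ) ≤ (n:ℝ) := by exact_mod_cast hn1
  have hnpos : (0:ℝ) < n := by linarith
  -- Step 1: bound the RHS by 2 * n^α
  have hboundα : 2 * (n:ℝ) * (80 * (n : ℝ) ^ ((1 : ℝ) / 2 - ϵ)) ^ (-(2 : ℝ) / (1 - ϵ))
      ≤ 2 * (n:ℝ) ^ α := by
    have h1 : (80 * (n : ℝ) ^ ((1 : ℝ) / 2 - ϵ)) ^ (-(2 : ℝ) / (1 - ϵ))
        = (80:ℝ) ^ (-(2 : ℝ) / (1 - ϵ)) * (n:ℝ) ^ (((1 : ℝ) / 2 - ϵ) * (-(2 : ℝ) / (1 - ϵ))) := by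
      rw [Real.mul_rpow (by norm_num) (Real.rpow_nonneg (le_of_lt hnpos) _),
        ← Real.rpow_mul (le_of_lt hnpos)]
    have hcle : (-(2:ℝ) / (1 - ϵ)) ≤ 0 :=
      div_nonpos_iff.mpr (Or.inr ⟨by norm_num, le_of_lt hϵ1'⟩)
    have h80 : (80:ℝ) ^ (-(2 : ℝ) / (1 - ϵ)) ≤ 1 :=
      Real.rpow_le_one_of_one_le_of_nonpos (by norm_num) hcle
    have hexp : 1 + ((1:ℝ)/2 - ϵ) * (-(2:ℝ)/(1-ϵ)) = α := by
      rw [hα]; field_simp; ring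
    have hpow : (0:ℝ) ≤ (n:ℝ) ^ (((1 : ℝ) / 2 - ϵ) * (-(2 : ℝ) / (1 - ϵ))) :=
      Real.rpow_nonneg (le_of_lt hnpos) _
    calc 2 * (n:ℝ) * (80 * (n : ℝ) ^ ((1 : ℝ) / 2 - ϵ)) ^ (-(2 : ℝ) / (1 - ϵ))
        = 2 * (n:ℝ) * ((80:ℝ) ^ (-(2 : ℝ) / (1 - ϵ)) *
            (n:ℝ) ^ (((1 : ℝ) / 2 - ϵ) * (-(2 : ℝ) / (1 - ϵ)))) := by rw [h1]
      _ ≤ 2 * (n:ℝ) * (1 * (n:ℝ) ^ (((1 : ℝ) / 2 - ϵ) * (-(2 : ℝ) / (1 - ϵ)))) := by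
          have : (0:ℝ) ≤ 2 * (n:ℝ) := by linarith
          exact mul_le_mul_of_nonneg_left (mul_le_mul_of_nonneg_right h80 hpow) this
      _ = 2 * ((n:ℝ) ^ (1:ℝ) * (n:ℝ) ^ (((1 : ℝ) / 2 - ϵ) * (-(2 : ℝ) / (1 - ϵ)))) := by
          rw [Real.rpow_one]; ring
      _ = 2 * (n:ℝ) ^ (1 + ((1 : ℝ) / 2 - ϵ) * (-(2 : ℝ) / (1 - ϵ))) := by
          rw [← Real.rpow_add hnpos]
      _ = 2 * (n:ℝ) ^ α := by rw [hexp]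
  -- Step 2: Hall's theorem gives a system of distinct representatives
  have hallcond : ∀ s : Finset {C // C ∈ K'},
      s.card ≤ (s.biUnion fun C => Clause.vars C.1).card := by
    intro s
    set K'' : CNF := s.image Subtype.val with hK''
    have hsub : K'' ⊆ K' := by
      intro C hC
      rw [hK'', Finset.mem_image] at hC
      obtain ⟨D, _, rfl⟩ := hC
      exact D.2
    have hcards : K''.card = s.card :=
      Finset.card_image_of_injective s Subtype.val_injective
    have hle : (K''.card : ℝ) ≤
        2 * n * (80 * (n : ℝ) ^ ((1 : ℝ) / 2 - ϵ)) ^ (-(2 : ℝ) / (1 - ϵ)) := by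
      refine le_trans ?_ hcard
      exact_mod_cast Finset.card_le_card hsub
    have hbig : K''.card ≤ (CNF.vars K'').card := hmatch K'' (hsub.trans hK') hle
    have hveq : CNF.vars K'' = s.biUnion fun C => Clause.vars C.1 := by
      rw [CNF.vars, Finset.sup_eq_biUnion, hK'', Finset.image_biUnion]
    rw [← hcards, ← hveq]
    exact hbig
  obtain ⟨f, hfinj, hfmem⟩ :=
    (Finset.all_card_le_biUnion_card_iff_exists_injective
      (fun C : {C // C ∈ K'} => Clause.vars C.1)).mp hallcond
  -- polarity choice
  have hpol : ∀ C : {C // C ∈ K'}, ∃ b : Bool, (f C, b) ∈ C.1 := by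
    intro C
    have h := hfmem C
    rw [Clause.vars, Finset.mem_image] at h
    obtain ⟨l, hl, hl2⟩ := h
    exact ⟨l.2, by rw [← hl2]; cases l; exact hl⟩
  choose p hp using hpol
  -- f C < n
  have hflt : ∀ C : {C // C ∈ K'}, f C < n := by
    intro C
    have h1 : f C ∈ Clause.vars C.1 := hfmem C
    have h2 : Clause.vars C.1 ⊆ CNF.vars K :=
      Finset.le_iff_subset.mp (Finset.le_sup (hK' C.2))
    have := hvars (h2 h1)
    simpa using this
  set F : {C // C ∈ K'} → Fin n := fun C => ⟨f C, hflt C⟩ with hF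
  have hFinj : Function.Injective F := by
    intro a b h
    exact hfinj (congrArg Fin.val h)
  set S : Finset (Fin n) := Finset.univ.image F with hS
  set g : Fin n → Bool :=
    fun i => if h : ∃ C, F C = i then p h.choose else false with hg
  -- fixed set is inside satSet
  have hTsub : {b : Fin n → Bool | ∀ i ∈ S, b i = g i} ⊆ satSet n K' := by
    intro b hb
    intro C hC
    set Cs : {C // C ∈ K'} := ⟨C, hC⟩ with hCs
    have hiS : F Cs ∈ S := by
      rw [hS]; exact Finset.mem_image_of_mem F (Finset.mem_univ Cs)
    have hbi : b (F Cs) = g (F Cs) := hb _ hiS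
    have hgv : g (F Cs) = p Cs := by
      have hex : ∃ C', F C' = F Cs := ⟨Cs, rfl⟩
      have hc : hex.choose = Cs := hFinj hex.choose_spec
      simp only [hg]
      rw [dif_pos hex, hc]
    refine ⟨(f Cs, p Cs), hp Cs, ?_⟩
    have hval : extendAssign b (f Cs) = p Cs := by
      rw [extendAssign, dif_pos (hflt Cs)]
      rw [hbi, hgv]
    rw [Lit.eval]
    cases hpc : p Cs <;> simp_all
  -- cardinality bounds
  have hT : (2:ℕ) ^ (n - S.card) ≤ (satSet n K').ncard := by
    rw [← fixed_ncard n S g]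
    exact Set.ncard_le_ncard hTsub (Set.toFinite _)
  have hScard : S.card ≤ K'.card := by
    refine le_trans Finset.card_image_le ?_
    simp [Finset.card_univ]
  have hSn : S.card ≤ n := by
    refine le_trans (Finset.card_le_univ S) ?_
    simp
  -- arithmetic conclusion
  have hKle : (K'.card : ℝ) ≤ 2 * (n:ℝ) ^ α := le_trans hcard hboundα
  have h3n : 3 ≤ (1 - δ) * (n:ℝ) ^ (1 - α) := hn₀ n (le_trans (le_max_left _ _) hn)
  have key : 2 * (n:ℝ) ^ α < (1 - δ) * n := by
    have hpow : (0:ℝ) < (n:ℝ) ^ α := Real.rpow_pos_of_pos hnpos α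
    have hlt : 2 * (n:ℝ) ^ α < ((1 - δ) * (n:ℝ) ^ (1 - α)) * (n:ℝ) ^ α :=
      mul_lt_mul_of_pos_right (lt_of_lt_of_le (by norm_num) h3n) hpow
    have heq : ((1 - δ) * (n:ℝ) ^ (1 - α)) * (n:ℝ) ^ α = (1 - δ) * n := by
      rw [mul_assoc, ← Real.rpow_add hnpos]
      norm_num
    rw [heq] at hlt
    exact hlt
  have hfinal : δ * n < ((n - S.card : ℕ) : ℝ) := by
    rw [Nat.cast_sub hSn]
    have h1 : (S.card:ℝ) ≤ (K'.card:ℝ) := by exact_mod_cast hScard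
    linarith
  calc (2:ℝ) ^ (δ * n) < (2:ℝ) ^ (((n - S.card : ℕ)) : ℝ) :=
        (Real.rpow_lt_rpow_left_iff one_lt_two).mpr hfinal
    _ = (((2:ℕ) ^ (n - S.card) : ℕ) : ℝ) := by
        rw [Real.rpow_natCast]; push_cast; ring
    _ ≤ ((satSet n K').ncard : ℝ) := by exact_mod_cast hT
end

section
/- Let K be a CNF formula over n variables with m clauses such that every sub-collection K'' ⊆ K satisfies |Vars(K'')| ≥ |K''| (where |K''| is the number of clauses of K''). Then there is an injective map assigning to each clause of K a variable occurring in that clause; consequently there is a truth assignment fixing at most m variables that satisfies K, and hence at least 2^{n−m} of the 2^n truth assignments satisfy K. -/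
open scoped Classical

/-- Hall-type matching for CNFs: if every sub-collection K'' ⊆ K has at
least as many variables as clauses, then there is a system of distinct
representative variables, a satisfying partial assignment fixing at most m
variables, and hence at least 2^{n−m} satisfying assignments. -/
theorem hall_matching_sat (n m : ℕ) (K : CNF) (hvars : CNF.vars K ⊆ Finset.range n)
    (hcard : K.card = m)
    (hhall : ∀ K'' : CNF, K'' ⊆ K → K''.card ≤ (CNF.vars K'').card) :
    (∃ g : Clause → Var, Set.InjOn g (K : Set Clause) ∧ ∀ C ∈ K, g C ∈ Clause.vars C) ∧
    (∃ (S : Finset Var) (a : Assignment), S.card ≤ m ∧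
      ∀ b : Assignment, (∀ v ∈ S, b v = a v) → CNF.Sat b K) ∧
    2 ^ (n - m) ≤ (satSet n K).ncard := by
  classical
  -- Hall's theorem on the subtype of clauses of K
  obtain ⟨f, hfinj, hfmem⟩ :
      ∃ f : {C // C ∈ K} → Var, Function.Injective f ∧ ∀ x, f x ∈ Clause.vars x.val := by
    apply (Finset.all_card_le_biUnion_card_iff_exists_injective
      (fun C : {C // C ∈ K} => Clause.vars C.val)).mp
    intro s
    have hsub : s.image Subtype.val ⊆ K := by
      intro C hC
      obtain ⟨x, _, rfl⟩ := Finset.mem_image.mp hC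
      exact x.2
    have h1 : s.card = (s.image Subtype.val).card :=
      (Finset.card_image_of_injective s Subtype.val_injective).symm
    have h2 : CNF.vars (s.image Subtype.val) = s.biUnion (fun C => Clause.vars C.val) := by
      rw [CNF.vars, Finset.sup_eq_biUnion]
      ext v
      simp [Finset.mem_biUnion]
    calc s.card = (s.image Subtype.val).card := h1
      _ ≤ (CNF.vars (s.image Subtype.val)).card := hhall _ hsub
      _ = _ := by rw [h2]
  -- the injective representative map
  set g : Clause → Var := fun C => if h : C ∈ K then f ⟨C, h⟩ else 0 with hg
  have hginj : Set.InjOn g (K : Set Clause) := by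
    intro C hC D hD hEq
    have hC' : C ∈ K := hC
    have hD' : D ∈ K := hD
    simp only [hg, dif_pos hC', dif_pos hD'] at hEq
    exact congrArg Subtype.val (hfinj hEq)
  have hgmem : ∀ C ∈ K, g C ∈ Clause.vars C := by
    intro C hC
    simp only [hg, dif_pos hC]
    exact hfmem ⟨C, hC⟩
  refine ⟨⟨g, hginj, hgmem⟩, ?_⟩
  -- choose a literal with variable g C in each clause
  have hlit : ∀ C ∈ K, ∃ l ∈ C, l.1 = g C := by
    intro C hC
    have := hgmem C hC
    rw [Clause.vars, Finset.mem_image] at this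
    obtain ⟨l, hl, hl2⟩ := this
    exact ⟨l, hl, hl2⟩
  set S : Finset Var := K.image g with hS
  -- the partial assignment
  set a : Assignment := fun v =>
    if h : ∃ C ∈ K, g C = v then ((hlit h.choose h.choose_spec.1).choose).2 else false
    with ha
  have hSat : ∀ b : Assignment, (∀ v ∈ S, b v = a v) → CNF.Sat b K := by
    intro b hb C hC
    have hex : ∃ C' ∈ K, g C' = g C := ⟨C, hC, rfl⟩
    have hCeq : hex.choose = C := hginj hex.choose_spec.1 hC hex.choose_spec.2
    obtain ⟨hlmem, hlvar⟩ := (hlit hex.choose hex.choose_spec.1).choose_spec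
    set l := (hlit hex.choose hex.choose_spec.1).choose with hl
    have hbv : b (g C) = l.2 := by
      rw [hb (g C) (Finset.mem_image_of_mem g hC), ha]
      simp only [dif_pos hex]
      rfl
    refine ⟨l, by rwa [hCeq] at hlmem, ?_⟩
    rw [Lit.eval]
    rw [hCeq] at hlvar
    rcases hl2 : l.2 with _ | _ <;> simp [hl2, hlvar, hbv]
  have hScard : S.card ≤ m := hcard ▸ Finset.card_image_le
  refine ⟨⟨S, a, hScard, hSat⟩, ?_⟩
  -- counting satisfying assignments
  have hSlt : ∀ v ∈ S, v < n := by
    intro v hv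
    obtain ⟨C, hC, rfl⟩ := Finset.mem_image.mp hv
    have : g C ∈ CNF.vars K := Finset.mem_sup.mpr ⟨C, hC, hgmem C hC⟩
    exact Finset.mem_range.mp (hvars this)
  set Sfin : Finset (Fin n) := S.attachFin hSlt with hSfin
  set F : ({i : Fin n // i ∉ Sfin} → Bool) → (Fin n → Bool) := fun c i =>
    if h : i ∈ Sfin then a i.val else c ⟨i, h⟩ with hF
  have hFinj : Function.Injective F := by
    intro c c' hEq
    funext ⟨i, hi⟩
    have := congrFun hEq i
    simpa only [hF, dif_neg hi] using this
  have hFsat : ∀ c, F c ∈ satSet n K := by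
    intro c
    apply hSat
    intro v hv
    have hvn : v < n := hSlt v hv
    have : extendAssign (F c) v = F c ⟨v, hvn⟩ := by
      rw [extendAssign]; simp [hvn]
    rw [this, hF]
    have hmem : (⟨v, hvn⟩ : Fin n) ∈ Sfin := (Finset.mem_attachFin hSlt).mpr hv
    simp [dif_pos hmem]
  have hrange : Set.range F ⊆ satSet n K := by
    rintro _ ⟨c, rfl⟩; exact hFsat c
  have hfin : (satSet n K).Finite := Set.toFinite _
  have h1 : (Set.range F).ncard ≤ (satSet n K).ncard := Set.ncard_le_ncard hrange hfin
  have h2 : (Set.range F).ncard = 2 ^ (n - S.card) := by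
    rw [Set.ncard_eq_toFinset_card', Set.toFinset_range,
      Finset.card_image_of_injective _ hFinj, Finset.card_univ, Fintype.card_fun,
      Fintype.card_bool]
    congr 1
    rw [Fintype.card_subtype_compl]
    have e : Fintype.card {x : Fin n // (x : ℕ) ∈ S} = S.card := by
      rw [← Finset.card_attachFin S hSlt, ← Fintype.card_coe (S.attachFin hSlt)]
      exact Fintype.card_congr (Equiv.subtypeEquivRight fun x => (Finset.mem_attachFin hSlt).symm)
    simp only [hSfin, Finset.mem_attachFin, e, Fintype.card_fin]
  have h3 : 2 ^ (n - m) ≤ 2 ^ (n - S.card) :=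
    Nat.pow_le_pow_right (by norm_num) (Nat.sub_le_sub_left hScard n)
  omega
end

section
/- Let S ⊆ {0,1}^n, let K' be a 3CNF formula over n variables, and let D be a clause over the same n variables. Suppose: (i) every assignment α ∈ S that satisfies K' also satisfies D; (ii) for every clause E of K' there exists an assignment α ∈ {0,1}^n that satisfies K' ∖ {E} and falsifies D; and (iii) 2^{n − |Vars(K') ∪ Vars(D)|} > |{0,1}^n ∖ S|, where Vars(D) is the set of variables occurring in D. Then every variable of the boundary ∂K' occurs in D; in particular, the width of D is at least |∂K'|. -/
open scoped Classical

/-- The boundary ∂K of a CNF: the set of variables occurring in exactly one clause of `K`. -/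
def CNF.boundary (K : CNF) : Finset Var :=
  (CNF.vars K).filter (fun v => (K.filter (fun C => v ∈ Clause.vars C)).card = 1)


lemma lit_eval_congr (a b : Assignment) (l : Lit) (h : a l.1 = b l.1) :
    Lit.eval a l = Lit.eval b l := by
  unfold Lit.eval; rw [h]

lemma clause_sat_congr (a b : Assignment) (C : Clause)
    (h : ∀ w ∈ Clause.vars C, a w = b w) :
    Clause.Sat a C ↔ Clause.Sat b C := by
  unfold Clause.Sat
  constructor <;> rintro ⟨l, hl, he⟩ <;> refine ⟨l, hl, ?_⟩
  · rw [← lit_eval_congr a b l (h _ (Finset.mem_image_of_mem _ hl))]; exact he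
  · rw [lit_eval_congr a b l (h _ (Finset.mem_image_of_mem _ hl))]; exact he

/-- if every assignment in S satisfying K' satisfies D, K' is minimal with
this property, and S misses fewer than 2^{n−|Vars(K')∪Vars(D)|} assignments, then
every boundary variable of K' occurs in D, so the width of D is at least |∂K'|. -/
theorem boundary_vars_occur_in_implied_clause (n : ℕ) (S : Set (Fin n → Bool))
    (K' : CNF) (D : Clause) (h3 : Is3CNF K') (hKvars : CNF.vars K' ⊆ Finset.range n)
    (hDprop : Clause.Proper D) (hDvars : Clause.vars D ⊆ Finset.range n)
    (himp : ∀ a ∈ S, CNF.Sat (extendAssign a) K' → Clause.Sat (extendAssign a) D)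
    (hmin : ∀ E ∈ K', ∃ a : Fin n → Bool,
      CNF.Sat (extendAssign a) (K'.erase E) ∧ ¬Clause.Sat (extendAssign a) D)
    (hS : (Sᶜ).ncard < 2 ^ (n - (CNF.vars K' ∪ Clause.vars D).card)) :
    CNF.boundary K' ⊆ Clause.vars D ∧ (CNF.boundary K').card ≤ D.card := by

  have hVsub : (CNF.vars K' ∪ Clause.vars D) ⊆ Finset.range n :=
    Finset.union_subset hKvars hDvars
  set V := CNF.vars K' ∪ Clause.vars D with hV
  have hsub : CNF.boundary K' ⊆ Clause.vars D := by
    intro v hvb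
    by_contra hvD
    have hvK : v ∈ CNF.vars K' := (Finset.mem_filter.mp hvb).1
    have hcard1 : (K'.filter (fun C => v ∈ Clause.vars C)).card = 1 :=
      (Finset.mem_filter.mp hvb).2
    obtain ⟨E, hE⟩ := Finset.card_eq_one.mp hcard1
    have hEmem : E ∈ K'.filter (fun C => v ∈ Clause.vars C) :=
      hE ▸ Finset.mem_singleton_self E
    have hEK : E ∈ K' := (Finset.mem_filter.mp hEmem).1
    have hvE : v ∈ Clause.vars E := (Finset.mem_filter.mp hEmem).2
    have hunique : ∀ C ∈ K', C ≠ E → v ∉ Clause.vars C := by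
      intro C hC hne hv
      have hmem : C ∈ K'.filter (fun C => v ∈ Clause.vars C) :=
        Finset.mem_filter.mpr ⟨hC, hv⟩
      rw [hE, Finset.mem_singleton] at hmem
      exact hne hmem
    have hvn : v < n := Finset.mem_range.mp (hKvars hvK)
    obtain ⟨a, haK, haD⟩ := hmin E hEK
    obtain ⟨l, hlE, hlv⟩ := Finset.mem_image.mp hvE
    set a' : Fin n → Bool := Function.update a ⟨v, hvn⟩ l.2 with ha'
    have hagree : ∀ w : Var, w ≠ v → extendAssign a' w = extendAssign a w := by
      intro w hw
      unfold extendAssign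
      split
      · next h =>
        rw [ha', Function.update_of_ne (by simpa [Fin.ext_iff] using hw)]
      · rfl
    have ha'v : extendAssign a' v = l.2 := by
      unfold extendAssign
      rw [dif_pos hvn, ha', Function.update_self]
    have ha'K : CNF.Sat (extendAssign a') K' := by
      intro C hC
      by_cases hCE : C = E
      · subst hCE
        refine ⟨l, hlE, ?_⟩
        unfold Lit.eval
        rw [hlv, ha'v]
        cases l.2 <;> simp
      · have hvC := hunique C hC hCE
        have hsat := haK C (Finset.mem_erase.mpr ⟨hCE, hC⟩)
        exact (clause_sat_congr _ _ C
          (fun w hw => hagree w (fun h => hvC (h ▸ hw)))).mpr hsat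
    have ha'D : ¬ Clause.Sat (extendAssign a') D := by
      intro h
      exact haD ((clause_sat_congr _ _ D
        (fun w hw => hagree w (fun h' => hvD (h' ▸ hw)))).mp h)
    set F : Finset (Fin n → Bool) :=
      Fintype.piFinset (fun i : Fin n =>
        if (i : ℕ) ∈ V then ({a' i} : Finset Bool) else Finset.univ) with hF
    have hFcard : F.card = 2 ^ (n - V.card) := by
      rw [hF, Fintype.card_piFinset]
      have hfac : ∀ i : Fin n,
          ((if (i : ℕ) ∈ V then ({a' i} : Finset Bool) else Finset.univ)).card
            = if (i : ℕ) ∈ V then 1 else 2 := by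
        intro i; split <;> simp
      simp_rw [hfac]
      rw [Finset.prod_ite, Finset.prod_const, Finset.prod_const]
      have hp : (Finset.univ.filter (fun i : Fin n => (i : ℕ) ∈ V)).card = V.card := by
        rw [← Finset.card_attachFin V (fun m hm => Finset.mem_range.mp (hVsub hm))]
        congr 1
        ext i
        simp [Finset.mem_attachFin]
      have hq := Finset.card_filter_add_card_filter_not
        (s := (Finset.univ : Finset (Fin n))) (p := fun i : Fin n => (i : ℕ) ∈ V)
      rw [Finset.card_univ, Fintype.card_fin] at hq
      have : (Finset.univ.filter (fun i : Fin n => ¬ (i : ℕ) ∈ V)).card = n - V.card := by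
        omega
      rw [this, hp, one_pow, one_mul]
    have hexists : ∃ b ∈ F, b ∈ S := by
      by_contra hcon
      push_neg at hcon
      have hsub' : F ⊆ (Sᶜ).toFinset := fun b hb => Set.mem_toFinset.mpr (hcon b hb)
      have hle := Finset.card_le_card hsub'
      rw [hFcard] at hle
      rw [Set.ncard_eq_toFinset_card'] at hS
      omega
    obtain ⟨b, hbF, hbS⟩ := hexists
    have hbagree : ∀ w ∈ V, extendAssign b w = extendAssign a' w := by
      intro w hw
      have hwn : w < n := Finset.mem_range.mp (hVsub hw)
      have hmem := Fintype.mem_piFinset.mp hbF ⟨w, hwn⟩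
      rw [if_pos hw] at hmem
      have hb : b ⟨w, hwn⟩ = a' ⟨w, hwn⟩ := Finset.mem_singleton.mp hmem
      unfold extendAssign
      rw [dif_pos hwn, dif_pos hwn, hb]
    have hbK : CNF.Sat (extendAssign b) K' := by
      intro C hC
      exact (clause_sat_congr _ _ C (fun w hw => hbagree w
        (Finset.mem_union_left _ ((Finset.le_sup hC : Clause.vars C ⊆ _) hw)))).mpr
        (ha'K C hC)
    have hbD : ¬ Clause.Sat (extendAssign b) D := by
      intro h
      exact ha'D ((clause_sat_congr _ _ D (fun w hw => hbagree w
        (Finset.mem_union_right _ hw))).mp h)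
    exact hbD (himp b hbS hbK)
  exact ⟨hsub, le_trans (Finset.card_le_card hsub) Finset.card_image_le⟩
end

section
/- Let K and A be CNF formulas (over possibly overlapping sets of variables) such that K ∪ A is unsatisfiable. For a clause D define μ(D) := min{ |K'| : K' ⊆ K and every truth assignment (to all variables) satisfying A ∪ K' satisfies D }, where |K'| is the number of clauses of K'. Let k ≥ 2 be an integer and suppose μ(□) ≥ k, where □ is the empty clause. Then every resolution refutation of K ∪ A contains a clause D with k/2 ≤ μ(D) < k. -/
open scoped Classical

/-- μ(D): the minimal number of clauses of a sub-collection K' ⊆ K such that every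
assignment satisfying A ∪ K' satisfies D. -/
noncomputable def muMeasure (K A : CNF) (D : Clause) : ℕ :=
  sInf {m : ℕ | ∃ K' : CNF, K' ⊆ K ∧
    (∀ a : Assignment, CNF.Sat a (A ∪ K') → Clause.Sat a D) ∧ K'.card = m}

private lemma sat_union' {a : Assignment} {P Q : CNF} :
    CNF.Sat a (P ∪ Q) ↔ CNF.Sat a P ∧ CNF.Sat a Q := by
  constructor
  · intro h
    exact ⟨fun C hC => h C (Finset.mem_union_left _ hC),
      fun C hC => h C (Finset.mem_union_right _ hC)⟩
  · rintro ⟨h1, h2⟩ C hC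
    rcases Finset.mem_union.mp hC with h | h
    exacts [h1 C h, h2 C h]

private lemma mu_spec (K A : CNF) (hunsat : CNF.Unsat (K ∪ A)) (D : Clause) :
    ∃ K' : CNF, K' ⊆ K ∧ (∀ a : Assignment, CNF.Sat a (A ∪ K') → Clause.Sat a D)
      ∧ K'.card = muMeasure K A D := by
  have hne : {m : ℕ | ∃ K' : CNF, K' ⊆ K ∧
      (∀ a : Assignment, CNF.Sat a (A ∪ K') → Clause.Sat a D) ∧ K'.card = m}.Nonempty := by
    refine ⟨K.card, K, subset_rfl, ?_, rfl⟩
    intro a ha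
    exact absurd ⟨a, sat_union'.mpr ⟨(sat_union'.mp ha).2, (sat_union'.mp ha).1⟩⟩ hunsat
  exact Nat.sInf_mem hne

private lemma mu_le (K A : CNF) {D : Clause} {K' : CNF} (h1 : K' ⊆ K)
    (h2 : ∀ a : Assignment, CNF.Sat a (A ∪ K') → Clause.Sat a D) :
    muMeasure K A D ≤ K'.card :=
  Nat.sInf_le ⟨K', h1, h2, rfl⟩

private lemma mu_mono (K A : CNF) (hunsat : CNF.Unsat (K ∪ A)) {E D : Clause} (h : E ⊆ D) :
    muMeasure K A D ≤ muMeasure K A E := by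
  obtain ⟨K', hs, hsat, hc⟩ := mu_spec K A hunsat E
  calc muMeasure K A D ≤ K'.card := by
        refine mu_le K A hs fun a ha => ?_
        obtain ⟨l, hl, he⟩ := hsat a ha
        exact ⟨l, h hl, he⟩
    _ = muMeasure K A E := hc

private lemma mu_axK (K A : CNF) {D : Clause} (hD : D ∈ K) : muMeasure K A D ≤ 1 := by
  have : muMeasure K A D ≤ ({D} : CNF).card := by
    refine mu_le K A (Finset.singleton_subset_iff.mpr hD) fun a ha => ?_
    exact ha D (Finset.mem_union_right _ (Finset.mem_singleton_self D))
  simpa using this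

private lemma mu_axA (K A : CNF) {D : Clause} (hD : D ∈ A) : muMeasure K A D = 0 := by
  have : muMeasure K A D ≤ (∅ : CNF).card := by
    refine mu_le K A (Finset.empty_subset K) fun a ha => ?_
    exact ha D (Finset.mem_union_left _ hD)
  simpa using this

private lemma mu_res (K A : CNF) (hunsat : CNF.Unsat (K ∪ A)) {C₁ C₂ : Clause} {x : Var}
    (h1 : (x, true) ∈ C₁) (h2 : (x, false) ∈ C₂) :
    muMeasure K A (C₁.erase (x, true) ∪ C₂.erase (x, false)) ≤
      muMeasure K A C₁ + muMeasure K A C₂ := by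
  obtain ⟨K₁, hs1, hsat1, hc1⟩ := mu_spec K A hunsat C₁
  obtain ⟨K₂, hs2, hsat2, hc2⟩ := mu_spec K A hunsat C₂
  have key : ∀ a : Assignment, CNF.Sat a (A ∪ (K₁ ∪ K₂)) →
      Clause.Sat a (C₁.erase (x, true) ∪ C₂.erase (x, false)) := by
    intro a ha
    obtain ⟨hA, hK⟩ := sat_union'.mp ha
    obtain ⟨hK1, hK2⟩ := sat_union'.mp hK
    have sC₁ := hsat1 a (sat_union'.mpr ⟨hA, hK1⟩)
    have sC₂ := hsat2 a (sat_union'.mpr ⟨hA, hK2⟩)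
    cases hax : a x with
    | true =>
      obtain ⟨l, hl, he⟩ := sC₂
      have hne : l ≠ (x, false) := by
        rintro rfl
        simp [Lit.eval, hax] at he
      exact ⟨l, Finset.mem_union_right _ (Finset.mem_erase.mpr ⟨hne, hl⟩), he⟩
    | false =>
      obtain ⟨l, hl, he⟩ := sC₁
      have hne : l ≠ (x, true) := by
        rintro rfl
        simp [Lit.eval, hax] at he
      exact ⟨l, Finset.mem_union_left _ (Finset.mem_erase.mpr ⟨hne, hl⟩), he⟩
  calc muMeasure K A (C₁.erase (x, true) ∪ C₂.erase (x, false)) ≤ (K₁ ∪ K₂).card :=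
        mu_le K A (Finset.union_subset hs1 hs2) key
    _ ≤ K₁.card + K₂.card := Finset.card_union_le _ _
    _ = _ := by rw [hc1, hc2]

/-- if μ(□) ≥ k then every resolution refutation of K ∪ A contains a
clause D with k/2 ≤ μ(D) < k. -/
theorem medium_complexity_clause (K A : CNF) (hKprop : CNF.Proper K) (hAprop : CNF.Proper A)
    (hunsat : CNF.Unsat (K ∪ A)) (k : ℕ) (hk : 2 ≤ k) (hmu : k ≤ muMeasure K A ∅) :
    ∀ L : List Clause, IsResRefutation (K ∪ A) L →
      ∃ D ∈ L, k ≤ 2 * muMeasure K A D ∧ muMeasure K A D < k := by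
  intro L hL
  obtain ⟨hne, hlast, hsteps⟩ := hL
  have hlen : 0 < L.length := List.length_pos_iff.mpr hne
  set S : Set ℕ := {i | ∃ h : i < L.length, k ≤ 2 * muMeasure K A (L.get ⟨i, h⟩)} with hS
  have hSne : S.Nonempty := by
    refine ⟨L.length - 1, Nat.sub_lt hlen one_pos, ?_⟩
    have hlg : L.get ⟨L.length - 1, Nat.sub_lt hlen one_pos⟩ = ∅ := by
      have h1 : L.getLast? = some (L.getLast hne) := List.getLast?_eq_getLast hne
      rw [h1] at hlast
      have h2 := Option.some.inj hlast
      rw [List.getLast_eq_getElem] at h2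
      exact h2
    rw [hlg]
    omega
  set i₀ := sInf S with hi₀def
  obtain ⟨hi₀lt, hi₀k⟩ : i₀ ∈ S := Nat.sInf_mem hSne
  have hbefore : ∀ j (hj : j < L.length), j < i₀ → 2 * muMeasure K A (L.get ⟨j, hj⟩) < k := by
    intro j hj hji
    by_contra hcon
    push_neg at hcon
    have hjS : j ∈ S := ⟨hj, hcon⟩
    have := Nat.sInf_le hjS
    omega
  have hprev : ∀ E ∈ L.take i₀, 2 * muMeasure K A E < k := by
    intro E hE
    obtain ⟨j, hj, hEq⟩ := List.getElem_of_mem hE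
    have hjlen : j < L.length := by
      have := hj
      simp [List.length_take] at this
      omega
    have hji : j < i₀ := by
      have := hj
      simp [List.length_take] at this
      omega
    have hgj : L[j] = E := by
      rw [← hEq, List.getElem_take]
    have := hbefore j hjlen hji
    simpa [List.get_eq_getElem, hgj] using this
  refine ⟨L.get ⟨i₀, hi₀lt⟩, List.get_mem L ⟨i₀, hi₀lt⟩, hi₀k, ?_⟩
  have hstep := (hsteps ⟨i₀, hi₀lt⟩).2
  rcases hstep with hax | ⟨E, hEm, hED⟩ | ⟨C₁, hC₁m, C₂, hC₂m, x, hx1, hx2, hDeq, _, _⟩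
  · rcases Finset.mem_union.mp hax with hK | hA
    · have := mu_axK K A hK
      omega
    · have := mu_axA K A hA
      omega
  · have h1 := mu_mono K A hunsat hED
    have h2 := hprev E hEm
    omega
  · have h1 := mu_res K A hunsat hx1 hx2
    rw [← hDeq] at h1
    have h2 := hprev C₁ hC₁m
    have h3 := hprev C₂ hC₂m
    omega
end
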